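/- arXiv:1411.2978 — 2 statements merged into one kernel-verified Lean document; each statement's English description precedes it below -/
import Mathlib

section
/- (Universal freezing.) Let D be a contractive, transposition invariant, and jointly convex distance on two-qubit density matrices, and define the geometric discord Q_D(ρ) = inf over classical two-qubit states χ of D(ρ,χ). Let c1, c3 ∈ [-1,1], let γ > 0, and for t ≥ 0 let ρ(t) = ρ(c1·e^{-2γt}, -c1·c3·e^{-2γt}, c3), the state of two qubits initially in the BD state ρ(c1,-c1·c3,c3) evolving under local phase flip channels. Then for every t ≥ 0 with e^{-2γt}·|c1| ≥ |c3|, one has Q_D(ρ(t)) = D(ρ(0,0,c3), ρ(0,0,0)); in particular, Q_D(ρ(t)) is constant on the interval 0 ≤ t ≤ t* = -(1/(2γ))·ln(|c3|/|c1|) whenever |c1| > |c3|. -/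
open Matrix Kronecker
open scoped ComplexOrder

noncomputable section

/-- 2×2 complex matrices (single-qubit operators). -/
abbrev Mat2 := Matrix (Fin 2) (Fin 2) ℂ

/-- 4×4 complex matrices (two-qubit operators), indexed by `Fin 2 × Fin 2`. -/
abbrev Mat4 := Matrix (Fin 2 × Fin 2) (Fin 2 × Fin 2) ℂ

/-- Pauli matrix σ₁ (x). -/
def σ1 : Mat2 := !![0, 1; 1, 0]

/-- Pauli matrix σ₂ (y). -/
def σ2 : Mat2 := !![0, -Complex.I; Complex.I, 0]

/-- Pauli matrix σ₃ (z). -/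
def σ3 : Mat2 := !![1, 0; 0, -1]

/-- The Bell-diagonal state ρ(c1,c2,c3) = (1/4)(I₄ + c1 σ₁⊗σ₁ + c2 σ₂⊗σ₂ + c3 σ₃⊗σ₃). -/
def BD (c1 c2 c3 : ℝ) : Mat4 :=
  (1 / 4 : ℂ) • ((1 : Mat4) + (c1 : ℂ) • (σ1 ⊗ₖ σ1) + (c2 : ℂ) • (σ2 ⊗ₖ σ2)
    + (c3 : ℂ) • (σ3 ⊗ₖ σ3))

/-- A two-qubit density matrix: positive semidefinite with unit trace. -/
def IsDensityMatrix (ρ : Mat4) : Prop := ρ.PosSemidef ∧ ρ.trace = 1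

/-- A CPTP map given by finitely many Kraus operators. -/
def IsCPTP (Λ : Mat4 → Mat4) : Prop :=
  ∃ (n : ℕ) (K : Fin n → Mat4),
    (∑ i, (K i)ᴴ * K i) = 1 ∧ ∀ X, Λ X = ∑ i, K i * X * (K i)ᴴ

/-- A distance `D` is contractive if it contracts under every CPTP map. -/
def Contractive (D : Mat4 → Mat4 → ℝ) : Prop :=
  ∀ Λ : Mat4 → Mat4, IsCPTP Λ → ∀ ρ σ : Mat4,
    IsDensityMatrix ρ → IsDensityMatrix σ → D (Λ ρ) (Λ σ) ≤ D ρ σ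

/-- A distance `D` is invariant under transposition. -/
def TransposeInvariant (D : Mat4 → Mat4 → ℝ) : Prop :=
  ∀ ρ σ : Mat4, IsDensityMatrix ρ → IsDensityMatrix σ → D ρᵀ σᵀ = D ρ σ

/-- A distance `D` is jointly convex. -/
def JointlyConvex (D : Mat4 → Mat4 → ℝ) : Prop :=
  ∀ q : ℝ, 0 ≤ q → q ≤ 1 → ∀ ρ σ τ ς : Mat4,
    IsDensityMatrix ρ → IsDensityMatrix σ → IsDensityMatrix τ → IsDensityMatrix ς →
    D (q • ρ + (1 - q) • σ) (q • τ + (1 - q) • ς) ≤ q * D ρ τ + (1 - q) * D σ ς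

/-- A classical-classical two-qubit state: ∑ᵢⱼ pᵢⱼ |aᵢ⟩⟨aᵢ| ⊗ |bⱼ⟩⟨bⱼ| with (pᵢⱼ) a
probability distribution and {aᵢ}, {bⱼ} orthonormal bases of ℂ². -/
def IsClassical (χ : Mat4) : Prop :=
  ∃ (p : Fin 2 → Fin 2 → ℝ) (a b : Fin 2 → Fin 2 → ℂ),
    (∀ i j, 0 ≤ p i j) ∧ (∑ i, ∑ j, p i j = 1) ∧
    (∀ i i', ∑ k, (starRingEnd ℂ) (a i k) * a i' k = if i = i' then 1 else 0) ∧
    (∀ j j', ∑ k, (starRingEnd ℂ) (b j k) * b j' k = if j = j' then 1 else 0) ∧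
    χ = ∑ i, ∑ j, (p i j : ℂ) •
      (Matrix.vecMulVec (a i) (star (a i)) ⊗ₖ Matrix.vecMulVec (b j) (star (b j)))

/-- Membership in the tetrahedron of Bell-diagonal states. -/
def InTetra (c : ℝ × ℝ × ℝ) : Prop :=
  c ∈ convexHull ℝ
    ({((1 : ℝ), (-1 : ℝ), (1 : ℝ)), ((-1 : ℝ), (1 : ℝ), (1 : ℝ)),
      ((1 : ℝ), (1 : ℝ), (-1 : ℝ)), ((-1 : ℝ), (-1 : ℝ), (-1 : ℝ))} : Set (ℝ × ℝ × ℝ))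

/-- Geometric discord: distance to the set of classical states. -/
def QD (D : Mat4 → Mat4 → ℝ) (ρ : Mat4) : ℝ :=
  sInf {x : ℝ | ∃ χ : Mat4, IsClassical χ ∧ x = D ρ χ}

/-- The Pauli matrices, indexed. -/
def pauli : Fin 3 → Mat2 := ![σ1, σ2, σ3]

namespace UF

/-- Pauli vector matrix x σ₁ + y σ₂ + z σ₃. -/
def pm (x y z : ℝ) : Mat2 :=
  !![(z:ℂ), (x:ℂ) - (y:ℂ)*Complex.I; (x:ℂ) + (y:ℂ)*Complex.I, -(z:ℂ)]

lemma pm_sigma1 : pm 1 0 0 = σ1 := by norm_num [pm, σ1]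
lemma pm_sigma2 : pm 0 1 0 = σ2 := by norm_num [pm, σ2]
lemma pm_sigma3 : pm 0 0 1 = σ3 := by norm_num [pm, σ3]

lemma pm_herm (x y z : ℝ) : (pm x y z)ᴴ = pm x y z := by
  ext i j
  fin_cases i <;> fin_cases j <;>
    simp [pm, Matrix.conjTranspose_apply, Complex.ext_iff]

lemma pm_anticomm (x1 y1 z1 x2 y2 z2 : ℝ) :
    pm x1 y1 z1 * pm x2 y2 z2 + pm x2 y2 z2 * pm x1 y1 z1
      = ((2*(x1*x2+y1*y2+z1*z2) : ℝ) : ℂ) • 1 := by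
  ext i j
  fin_cases i <;> fin_cases j <;>
    simp [pm, Matrix.mul_apply, Fin.sum_univ_two, Matrix.one_apply, Complex.ext_iff] <;>
    (try constructor) <;> ring

lemma pm_sq (x y z : ℝ) (h : x^2 + y^2 + z^2 = 1) :
    pm x y z * pm x y z = 1 := by
  have h2 := pm_anticomm x y z x y z
  have hc : ((2*(x*x+y*y+z*z) : ℝ) : ℂ) = (2:ℂ) := by
    have : 2*(x*x+y*y+z*z) = 2 := by nlinarith
    rw [this]; norm_num
  rw [hc, ← two_smul ℂ (pm x y z * pm x y z)] at h2
  exact smul_right_injective Mat2 (two_ne_zero) h2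

lemma pm_conj (x1 y1 z1 x2 y2 z2 : ℝ) (h1 : x1^2 + y1^2 + z1^2 = 1) :
    pm x1 y1 z1 * pm x2 y2 z2 * pm x1 y1 z1
      = ((2*(x1*x2+y1*y2+z1*z2) : ℝ) : ℂ) • pm x1 y1 z1 - pm x2 y2 z2 := by
  have h := pm_anticomm x1 y1 z1 x2 y2 z2
  have hsq := pm_sq x1 y1 z1 h1
  have e1 : pm x1 y1 z1 * pm x2 y2 z2 * pm x1 y1 z1
      = (pm x1 y1 z1 * pm x2 y2 z2 + pm x2 y2 z2 * pm x1 y1 z1) * pm x1 y1 z1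
        - pm x2 y2 z2 * (pm x1 y1 z1 * pm x1 y1 z1) := by noncomm_ring
  rw [e1, h, hsq, Matrix.smul_mul, one_mul, mul_one]

lemma isCPTP_id : IsCPTP (fun X : Mat4 => X) :=
  ⟨1, ![1], by simp, fun X => by simp⟩

lemma isCPTP_conj {V : Mat4} (hV : Vᴴ * V = 1) : IsCPTP (fun X => V * X * Vᴴ) :=
  ⟨1, ![V], by simpa using hV, fun X => by simp⟩

lemma cptp_comp {Λ₁ Λ₂ : Mat4 → Mat4} (h₁ : IsCPTP Λ₁) (h₂ : IsCPTP Λ₂) :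
    IsCPTP (fun X => Λ₁ (Λ₂ X)) := by
  obtain ⟨n, K, hK, hKe⟩ := h₁
  obtain ⟨m, L, hL, hLe⟩ := h₂
  refine ⟨n*m, fun i => K (finProdFinEquiv.symm i).1 * L (finProdFinEquiv.symm i).2, ?_, ?_⟩
  · rw [Fintype.sum_bijective finProdFinEquiv.symm (Equiv.bijective _) _
      (fun p : Fin n × Fin m => (K p.1 * L p.2)ᴴ * (K p.1 * L p.2)) (fun i => rfl)]
    rw [Fintype.sum_prod_type, Finset.sum_comm]
    have inner : ∀ j : Fin m, (∑ i, (K i * L j)ᴴ * (K i * L j)) = (L j)ᴴ * L j := by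
      intro j
      have e : ∀ i, (K i * L j)ᴴ * (K i * L j) = (L j)ᴴ * ((K i)ᴴ * K i) * L j := by
        intro i; rw [Matrix.conjTranspose_mul]; noncomm_ring
      simp_rw [e]
      rw [← Finset.sum_mul, ← Finset.mul_sum, hK, mul_one]
    simp_rw [inner, hL]
  · intro X
    show Λ₁ (Λ₂ X) = _
    rw [Fintype.sum_bijective finProdFinEquiv.symm (Equiv.bijective _) _
      (fun p : Fin n × Fin m => (K p.1 * L p.2) * X * (K p.1 * L p.2)ᴴ) (fun i => rfl)]
    rw [hKe, hLe, Fintype.sum_prod_type]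
    refine Finset.sum_congr rfl fun i _ => ?_
    rw [Finset.mul_sum, Finset.sum_mul]
    refine Finset.sum_congr rfl fun j _ => ?_
    rw [Matrix.conjTranspose_mul]; noncomm_ring

lemma cptp_mix {Λ₁ Λ₂ : Mat4 → Mat4} (h₁ : IsCPTP Λ₁) (h₂ : IsCPTP Λ₂)
    {κ : ℝ} (h0 : 0 ≤ κ) (h1 : κ ≤ 1) :
    IsCPTP (fun X => (κ:ℂ) • Λ₁ X + ((1-κ :ℝ):ℂ) • Λ₂ X) := by
  obtain ⟨n, K, hK, hKe⟩ := h₁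
  obtain ⟨m, L, hL, hLe⟩ := h₂
  set sk : ℂ := ((Real.sqrt κ : ℝ) : ℂ) with hskdef
  set sl : ℂ := ((Real.sqrt (1-κ) : ℝ) : ℂ) with hsldef
  have hsk : star sk * sk = (κ:ℂ) := by
    rw [hskdef, Complex.star_def, Complex.conj_ofReal, ← Complex.ofReal_mul,
      Real.mul_self_sqrt h0]
  have hsl : star sl * sl = ((1-κ:ℝ):ℂ) := by
    rw [hsldef, Complex.star_def, Complex.conj_ofReal, ← Complex.ofReal_mul,
      Real.mul_self_sqrt (by linarith)]
  refine ⟨n+m, fun i => Sum.elim (fun a => sk • K a) (fun b => sl • L b)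
      (finSumFinEquiv.symm i), ?_, ?_⟩
  · rw [Fintype.sum_bijective finSumFinEquiv.symm (Equiv.bijective _) _
      (fun p : Fin n ⊕ Fin m => (Sum.elim (fun a => sk • K a) (fun b => sl • L b) p)ᴴ *
        (Sum.elim (fun a => sk • K a) (fun b => sl • L b) p)) (fun i => rfl)]
    rw [Fintype.sum_sum_type]
    simp only [Sum.elim_inl, Sum.elim_inr, Matrix.conjTranspose_smul,
      Matrix.smul_mul, Matrix.mul_smul, smul_smul]
    rw [← Finset.smul_sum, ← Finset.smul_sum, hK, hL, mul_comm sk (star sk),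
      mul_comm sl (star sl), hsk, hsl, ← add_smul]
    norm_num
  · intro X
    show (κ:ℂ) • Λ₁ X + ((1-κ :ℝ):ℂ) • Λ₂ X = _
    rw [Fintype.sum_bijective finSumFinEquiv.symm (Equiv.bijective _) _
      (fun p : Fin n ⊕ Fin m => (Sum.elim (fun a => sk • K a) (fun b => sl • L b) p) * X *
        (Sum.elim (fun a => sk • K a) (fun b => sl • L b) p)ᴴ) (fun i => rfl)]
    rw [Fintype.sum_sum_type, hKe, hLe]
    simp only [Sum.elim_inl, Sum.elim_inr, Matrix.conjTranspose_smul,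
      Matrix.smul_mul, Matrix.mul_smul, smul_smul]
    rw [← Finset.smul_sum, ← Finset.smul_sum, hsk, hsl]

lemma isCPTP_flip {S : Mat4} (hH : Sᴴ = S) (h2 : S * S = 1) :
    IsCPTP (fun X => (2⁻¹:ℂ) • (X + S * X * S)) := by
  refine ⟨2, ![(2⁻¹:ℂ) • (1 + S), (2⁻¹:ℂ) • (1 - S)], ?_, ?_⟩
  · rw [Fin.sum_univ_two]
    simp only [Matrix.cons_val_zero, Matrix.cons_val_one, Matrix.head_cons,
      Matrix.conjTranspose_smul, Matrix.conjTranspose_add, Matrix.conjTranspose_sub,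
      Matrix.conjTranspose_one, hH, Matrix.smul_mul, Matrix.mul_smul, smul_smul]
    have h2s : star (2⁻¹:ℂ) = 2⁻¹ := by simp
    rw [h2s]
    have expand : (1 + S) * (1 + S) + (1 - S) * (1 - S) = ((1:Mat4) + 1) + (S*S + S*S) := by
      noncomm_ring
    rw [← smul_add, expand, h2]
    module
  · intro X
    rw [Fin.sum_univ_two]
    simp only [Matrix.cons_val_zero, Matrix.cons_val_one, Matrix.head_cons,
      Matrix.conjTranspose_smul, Matrix.conjTranspose_add, Matrix.conjTranspose_sub,
      Matrix.conjTranspose_one, hH, Matrix.smul_mul, Matrix.mul_smul, smul_smul]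
    have h2s : star (2⁻¹:ℂ) = 2⁻¹ := by simp
    rw [h2s]
    have expand : (1 + S) * X * (1 + S) + (1 - S) * X * (1 - S)
        = (X + X) + (S*X*S + S*X*S) := by noncomm_ring
    symm
    rw [← smul_add, expand]
    module

end UF

namespace UF

set_option maxHeartbeats 1000000

/-! ### Kronecker helpers -/

lemma kron_conjT (A B : Mat2) : (A ⊗ₖ B)ᴴ = Aᴴ ⊗ₖ Bᴴ := by
  ext i j
  simp [Matrix.conjTranspose_apply, Matrix.kroneckerMap_apply, mul_comm]

lemma kron_conj (u v A B : Mat2) :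
    (u ⊗ₖ v) * (A ⊗ₖ B) * (u ⊗ₖ v) = (u*A*u) ⊗ₖ (v*B*v) := by
  rw [← Matrix.mul_kronecker_mul, ← Matrix.mul_kronecker_mul]

lemma sub_kron (A B C : Mat2) : (A - B) ⊗ₖ C = A ⊗ₖ C - B ⊗ₖ C := by
  ext i j
  simp [Matrix.kroneckerMap_apply, sub_mul]

lemma kron_sub (A B C : Mat2) : A ⊗ₖ (B - C) = A ⊗ₖ B - A ⊗ₖ C := by
  ext i j
  simp [Matrix.kroneckerMap_apply, mul_sub]

lemma neg_kron (A B : Mat2) : (-A) ⊗ₖ B = -(A ⊗ₖ B) := by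
  ext i j; simp [Matrix.kroneckerMap_apply]

lemma kron_neg (A B : Mat2) : A ⊗ₖ (-B) = -(A ⊗ₖ B) := by
  ext i j; simp [Matrix.kroneckerMap_apply]

/-! ### the flip channel -/

def flipP (s t : Mat2) : Mat4 → Mat4 := fun X => (2⁻¹:ℂ) • (X + (s ⊗ₖ t) * X * (s ⊗ₖ t))

lemma isCPTP_flipP {s t : Mat2} (hs : sᴴ = s) (ht : tᴴ = t) (hs2 : s*s = 1) (ht2 : t*t = 1) :
    IsCPTP (flipP s t) := by
  have h1 : (s ⊗ₖ t)ᴴ = s ⊗ₖ t := by rw [kron_conjT, hs, ht]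
  have h2 : (s ⊗ₖ t) * (s ⊗ₖ t) = 1 := by
    rw [← Matrix.mul_kronecker_mul, hs2, ht2, Matrix.one_kronecker_one]
  exact isCPTP_flip h1 h2

lemma flipP_one {s t : Mat2} (hs2 : s*s = 1) (ht2 : t*t = 1) : flipP s t 1 = 1 := by
  unfold flipP
  rw [mul_one, ← Matrix.mul_kronecker_mul, hs2, ht2, Matrix.one_kronecker_one, ← two_smul ℂ,
    smul_smul]
  norm_num

/-! ### rotation about the y axis -/

def rotY (c s : ℝ) : Mat2 := !![(c:ℂ), -(s:ℂ); (s:ℂ), (c:ℂ)]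

lemma rotY_unitary (c s : ℝ) (h : c^2 + s^2 = 1) : (rotY c s)ᴴ * rotY c s = 1 := by
  ext i j
  fin_cases i <;> fin_cases j <;>
    simp [rotY, Matrix.mul_apply, Fin.sum_univ_two, Matrix.one_apply,
      Matrix.conjTranspose_apply, Complex.ext_iff] <;>
    (try constructor) <;> nlinarith [h]

lemma rotY_unitary' (c s : ℝ) (h : c^2 + s^2 = 1) : rotY c s * (rotY c s)ᴴ = 1 :=
  mul_eq_one_comm.mp (rotY_unitary c s h)

lemma rotY_conj (c s d1 d3 : ℝ) (hd : d1^2 + d3^2 = 1) (h1 : c^2 + s^2 = 1)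
    (h2 : c^2 - s^2 = d3) (h3 : 2*c*s = -d1) :
    rotY c s * pm d1 0 d3 * (rotY c s)ᴴ = pm 0 0 1 := by
  ext i j
  fin_cases i <;> fin_cases j <;>
    simp [rotY, pm, Matrix.mul_apply, Fin.sum_univ_two, Matrix.conjTranspose_apply,
      Complex.ext_iff] <;>
    (try constructor) <;>
    first
      | rfl
      | linear_combination d3*h2 - d1*h3 + hd
      | linear_combination d1*h2 + d3*h3
      | linear_combination -(d3*h2) + d1*h3 - hd
      | ring

/-! ### Bell-diagonal states in pm form -/

lemma BD_pm (c1 c2 c3 : ℝ) :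
    BD c1 c2 c3 = (4⁻¹:ℂ) • ((1:Mat4) + (c1 : ℂ) • (pm 1 0 0 ⊗ₖ pm 1 0 0)
      + (c2 : ℂ) • (pm 0 1 0 ⊗ₖ pm 0 1 0) + (c3 : ℂ) • (pm 0 0 1 ⊗ₖ pm 0 0 1)) := by
  rw [BD, pm_sigma1, pm_sigma2, pm_sigma3]
  norm_num

lemma BD_zero : BD 0 0 0 = (4⁻¹:ℂ) • (1:Mat4) := by
  rw [BD_pm]; norm_num

lemma BD_axis3 (c : ℝ) : BD 0 0 c = (4⁻¹:ℂ) • ((1:Mat4) + (c:ℂ) • (pm 0 0 1 ⊗ₖ pm 0 0 1)) := by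
  rw [BD_pm]; norm_num

lemma BD_axis1 (c : ℝ) : BD c 0 0 = (4⁻¹:ℂ) • ((1:Mat4) + (c:ℂ) • (pm 1 0 0 ⊗ₖ pm 1 0 0)) := by
  rw [BD_pm]; norm_num

/-! ### Bell vectors -/

def uPP : Fin 2 × Fin 2 → ℂ := fun p => if p.1 = p.2 then 1 else 0
def uPM : Fin 2 × Fin 2 → ℂ := fun p => if p = (0,0) then 1 else if p = (1,1) then -1 else 0
def uSP : Fin 2 × Fin 2 → ℂ := fun p => if p.1 = p.2 then 0 else 1
def uSM : Fin 2 × Fin 2 → ℂ := fun p => if p = (0,1) then 1 else if p = (1,0) then -1 else 0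

lemma bellPP : Matrix.vecMulVec uPP (star uPP)
    = (2⁻¹:ℂ) • ((1:Mat4) + σ1 ⊗ₖ σ1 - σ2 ⊗ₖ σ2 + σ3 ⊗ₖ σ3) := by
  ext ⟨i1,i2⟩ ⟨j1,j2⟩
  fin_cases i1 <;> fin_cases i2 <;> fin_cases j1 <;> fin_cases j2 <;>
    simp [uPP, σ1, σ2, σ3, Matrix.kroneckerMap_apply, Matrix.vecMulVec_apply,
      Matrix.one_apply, Complex.ext_iff, Prod.ext_iff] <;> norm_num

lemma bellPM : Matrix.vecMulVec uPM (star uPM)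
    = (2⁻¹:ℂ) • ((1:Mat4) - σ1 ⊗ₖ σ1 + σ2 ⊗ₖ σ2 + σ3 ⊗ₖ σ3) := by
  ext ⟨i1,i2⟩ ⟨j1,j2⟩
  fin_cases i1 <;> fin_cases i2 <;> fin_cases j1 <;> fin_cases j2 <;>
    simp [uPM, σ1, σ2, σ3, Matrix.kroneckerMap_apply, Matrix.vecMulVec_apply,
      Matrix.one_apply, Complex.ext_iff, Prod.ext_iff] <;> norm_num

lemma bellSP : Matrix.vecMulVec uSP (star uSP)
    = (2⁻¹:ℂ) • ((1:Mat4) + σ1 ⊗ₖ σ1 + σ2 ⊗ₖ σ2 - σ3 ⊗ₖ σ3) := by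
  ext ⟨i1,i2⟩ ⟨j1,j2⟩
  fin_cases i1 <;> fin_cases i2 <;> fin_cases j1 <;> fin_cases j2 <;>
    simp [uSP, σ1, σ2, σ3, Matrix.kroneckerMap_apply, Matrix.vecMulVec_apply,
      Matrix.one_apply, Complex.ext_iff, Prod.ext_iff] <;> norm_num

lemma bellSM : Matrix.vecMulVec uSM (star uSM)
    = (2⁻¹:ℂ) • ((1:Mat4) - σ1 ⊗ₖ σ1 - σ2 ⊗ₖ σ2 - σ3 ⊗ₖ σ3) := by
  ext ⟨i1,i2⟩ ⟨j1,j2⟩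
  fin_cases i1 <;> fin_cases i2 <;> fin_cases j1 <;> fin_cases j2 <;>
    simp [uSM, σ1, σ2, σ3, Matrix.kroneckerMap_apply, Matrix.vecMulVec_apply,
      Matrix.one_apply, Complex.ext_iff, Prod.ext_iff] <;> norm_num

/-! ### positive semidefiniteness -/

lemma psd_outer {n : Type*} [Fintype n] [DecidableEq n] (v : n → ℂ) :
    (Matrix.vecMulVec v (star v)).PosSemidef := by
  rw [Matrix.vecMulVec_eq Unit, ← Matrix.conjTranspose_replicateCol]
  exact Matrix.posSemidef_self_mul_conjTranspose _

lemma psd_smul {n : Type*} [Fintype n] {M : Matrix n n ℂ} (h : M.PosSemidef) {c : ℝ}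
    (hc : 0 ≤ c) : ((c:ℂ) • M).PosSemidef := by
  constructor
  · have h1 := h.1
    unfold Matrix.IsHermitian at h1 ⊢
    rw [Matrix.conjTranspose_smul, h1, Complex.star_def, Complex.conj_ofReal]
  · intro x
    exact (Matrix.PosSemidef.smul h (show (0:ℂ) ≤ (c:ℂ) by exact_mod_cast hc)).2 x

lemma trace_BD (c1 c2 c3 : ℝ) : (BD c1 c2 c3).trace = 1 := by
  have t1 : (σ1).trace = 0 := by simp [σ1, Matrix.trace_fin_two_of]
  have t2 : (σ2).trace = 0 := by simp [σ2, Matrix.trace_fin_two_of]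
  have t3 : (σ3).trace = 0 := by simp [σ3, Matrix.trace_fin_two_of]
  rw [BD]
  rw [Matrix.trace_smul, Matrix.trace_add, Matrix.trace_add, Matrix.trace_add,
    Matrix.trace_smul, Matrix.trace_smul, Matrix.trace_smul,
    Matrix.trace_kronecker, Matrix.trace_kronecker, Matrix.trace_kronecker,
    t1, t2, t3, Matrix.trace_one]
  norm_num

lemma isDensity_BD (x y : ℝ) (hx : |x| ≤ 1) (hy : |y| ≤ 1) :
    IsDensityMatrix (BD x (-(x*y)) y) := by
  constructor
  · have hx1 : -1 ≤ x := (abs_le.mp hx).1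
    have hx2 : x ≤ 1 := (abs_le.mp hx).2
    have hy1 : -1 ≤ y := (abs_le.mp hy).1
    have hy2 : y ≤ 1 := (abs_le.mp hy).2
    have key : BD x (-(x*y)) y
        = (((1+x)*(1+y)/8 : ℝ):ℂ) • Matrix.vecMulVec uPP (star uPP)
        + (((1-x)*(1+y)/8 : ℝ):ℂ) • Matrix.vecMulVec uPM (star uPM)
        + (((1+x)*(1-y)/8 : ℝ):ℂ) • Matrix.vecMulVec uSP (star uSP)
        + (((1-x)*(1-y)/8 : ℝ):ℂ) • Matrix.vecMulVec uSM (star uSM) := by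
      rw [bellPP, bellPM, bellSP, bellSM, BD]
      push_cast
      module
    rw [key]
    refine Matrix.PosSemidef.add (Matrix.PosSemidef.add (Matrix.PosSemidef.add ?_ ?_) ?_) ?_ <;>
      refine psd_smul (psd_outer _) (by nlinarith)
  · exact trace_BD _ _ _

end UF

namespace UF

set_option maxHeartbeats 2000000

/-! ### CNOT -/

def E0 : Mat2 := !![1,0;0,0]
def E1 : Mat2 := !![0,0;0,1]
def CN : Mat4 := (1:Mat2) ⊗ₖ E0 + σ1 ⊗ₖ E1

lemma CN_herm : CNᴴ = CN := by
  ext ⟨i1,i2⟩ ⟨j1,j2⟩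
  fin_cases i1 <;> fin_cases i2 <;> fin_cases j1 <;> fin_cases j2 <;>
    simp [CN, E0, E1, σ1, Matrix.conjTranspose_apply, Matrix.kroneckerMap_apply,
      Matrix.one_apply]

lemma CN_sq : CN * CN = 1 := by
  ext ⟨i1,i2⟩ ⟨j1,j2⟩
  fin_cases i1 <;> fin_cases i2 <;> fin_cases j1 <;> fin_cases j2 <;>
    simp [CN, E0, E1, σ1, Matrix.mul_apply, Matrix.kroneckerMap_apply,
      Fintype.sum_prod_type, Fin.sum_univ_two, Matrix.one_apply, Prod.ext_iff] <;>
    norm_num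

lemma CN_conj_z1 : CN * (σ3 ⊗ₖ (1:Mat2)) * CN = σ3 ⊗ₖ σ3 := by
  ext ⟨i1,i2⟩ ⟨j1,j2⟩
  fin_cases i1 <;> fin_cases i2 <;> fin_cases j1 <;> fin_cases j2 <;>
    simp [CN, E0, E1, σ1, σ3, Matrix.mul_apply, Matrix.kroneckerMap_apply,
      Fintype.sum_prod_type, Fin.sum_univ_two, Matrix.one_apply, Prod.ext_iff] <;>
    norm_num

lemma CN_conj_zz : CN * (σ3 ⊗ₖ σ3) * CN = σ3 ⊗ₖ (1:Mat2) := by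
  ext ⟨i1,i2⟩ ⟨j1,j2⟩
  fin_cases i1 <;> fin_cases i2 <;> fin_cases j1 <;> fin_cases j2 <;>
    simp [CN, E0, E1, σ1, σ3, Matrix.mul_apply, Matrix.kroneckerMap_apply,
      Fintype.sum_prod_type, Fin.sum_univ_two, Matrix.one_apply, Prod.ext_iff] <;>
    norm_num

lemma CN_conj_x2 : CN * ((1:Mat2) ⊗ₖ σ1) * CN = σ1 ⊗ₖ σ1 := by
  ext ⟨i1,i2⟩ ⟨j1,j2⟩
  fin_cases i1 <;> fin_cases i2 <;> fin_cases j1 <;> fin_cases j2 <;>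
    simp [CN, E0, E1, σ1, Matrix.mul_apply, Matrix.kroneckerMap_apply,
      Fintype.sum_prod_type, Fin.sum_univ_two, Matrix.one_apply, Prod.ext_iff] <;>
    norm_num

lemma CN_conj_zx : CN * (σ3 ⊗ₖ σ1) * CN = -(σ2 ⊗ₖ σ2) := by
  ext ⟨i1,i2⟩ ⟨j1,j2⟩
  fin_cases i1 <;> fin_cases i2 <;> fin_cases j1 <;> fin_cases j2 <;>
    simp [CN, E0, E1, σ1, σ2, σ3, Matrix.mul_apply, Matrix.kroneckerMap_apply,
      Fintype.sum_prod_type, Fin.sum_univ_two, Matrix.one_apply, Prod.ext_iff] <;>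
    norm_num

/-! ### the preparation channel R -/

def rp (A : ℝ) : ℂ := ((Real.sqrt ((1+A)/4) : ℝ) : ℂ)
def rm (A : ℝ) : ℂ := ((Real.sqrt ((1-A)/4) : ℝ) : ℂ)
def K0 (A : ℝ) : Mat4 := rp A • ((1:Mat2) ⊗ₖ !![1,0;1,0])
def K1 (A : ℝ) : Mat4 := rp A • ((1:Mat2) ⊗ₖ !![0,1;0,1])
def K2 (A : ℝ) : Mat4 := rm A • ((1:Mat2) ⊗ₖ !![1,0;-1,0])
def K3 (A : ℝ) : Mat4 := rm A • ((1:Mat2) ⊗ₖ !![0,1;0,-1])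

def Rch (A : ℝ) : Mat4 → Mat4 := fun X =>
  K0 A * X * (K0 A)ᴴ + K1 A * X * (K1 A)ᴴ + K2 A * X * (K2 A)ᴴ + K3 A * X * (K3 A)ᴴ

lemma rp_sq {A : ℝ} (hA : |A| ≤ 1) : star (rp A) * rp A = (((1+A)/4 : ℝ) : ℂ) := by
  have h1 : (0:ℝ) ≤ (1+A)/4 := by have := (abs_le.mp hA).1; linarith
  rw [rp, Complex.star_def, Complex.conj_ofReal, ← Complex.ofReal_mul, Real.mul_self_sqrt h1]

lemma rm_sq {A : ℝ} (hA : |A| ≤ 1) : star (rm A) * rm A = (((1-A)/4 : ℝ) : ℂ) := by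
  have h1 : (0:ℝ) ≤ (1-A)/4 := by have := (abs_le.mp hA).2; linarith
  rw [rm, Complex.star_def, Complex.conj_ofReal, ← Complex.ofReal_mul, Real.mul_self_sqrt h1]

lemma rp_sq' {A : ℝ} (hA : |A| ≤ 1) : rp A * star (rp A) = (((1+A)/4 : ℝ) : ℂ) := by
  rw [mul_comm]; exact rp_sq hA

lemma rm_sq' {A : ℝ} (hA : |A| ≤ 1) : rm A * star (rm A) = (((1-A)/4 : ℝ) : ℂ) := by
  rw [mul_comm]; exact rm_sq hA

lemma one4_kron : (1:Mat4) = (1:Mat2) ⊗ₖ (1:Mat2) := Matrix.one_kronecker_one.symm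

lemma isCPTP_Rch (A : ℝ) (hA : |A| ≤ 1) : IsCPTP (Rch A) := by
  refine ⟨4, ![K0 A, K1 A, K2 A, K3 A], ?_, fun X => by
    simp [Fin.sum_univ_four, Rch]⟩
  rw [Fin.sum_univ_four]
  simp only [Matrix.cons_val_zero, Matrix.cons_val_one, Matrix.head_cons,
    Matrix.cons_val_two, Matrix.tail_cons, Matrix.cons_val_three]
  unfold K0 K1 K2 K3
  simp only [Matrix.conjTranspose_smul, kron_conjT, Matrix.conjTranspose_one,
    Matrix.smul_mul, Matrix.mul_smul, smul_smul, ← Matrix.mul_kronecker_mul, one_mul]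
  rw [rp_sq' hA, rm_sq' hA]
  have e0 : (!![1,0;1,0] : Mat2)ᴴ * !![1,0;1,0] = (2:ℂ) • E0 := by
    ext i j; fin_cases i <;> fin_cases j <;>
      simp [E0, Matrix.mul_apply, Fin.sum_univ_two, Matrix.conjTranspose_apply] <;> norm_num
  have e1 : (!![0,1;0,1] : Mat2)ᴴ * !![0,1;0,1] = (2:ℂ) • E1 := by
    ext i j; fin_cases i <;> fin_cases j <;>
      simp [E1, Matrix.mul_apply, Fin.sum_univ_two, Matrix.conjTranspose_apply] <;> norm_num
  have e2 : (!![1,0;-1,0] : Mat2)ᴴ * !![1,0;-1,0] = (2:ℂ) • E0 := by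
    ext i j; fin_cases i <;> fin_cases j <;>
      simp [E0, Matrix.mul_apply, Fin.sum_univ_two, Matrix.conjTranspose_apply] <;> norm_num
  have e3 : (!![0,1;0,-1] : Mat2)ᴴ * !![0,1;0,-1] = (2:ℂ) • E1 := by
    ext i j; fin_cases i <;> fin_cases j <;>
      simp [E1, Matrix.mul_apply, Fin.sum_univ_two, Matrix.conjTranspose_apply] <;> norm_num
  rw [e0, e1, e2, e3]
  have hE : E0 + E1 = (1:Mat2) := by
    ext i j; fin_cases i <;> fin_cases j <;> simp [E0, E1, Matrix.one_apply]
  have hone : (1:Mat4) = (1:Mat2) ⊗ₖ E0 + (1:Mat2) ⊗ₖ E1 := by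
    rw [← Matrix.kronecker_add, hE, Matrix.one_kronecker_one]
  conv_rhs => rw [hone]
  simp only [Matrix.kronecker_smul, smul_smul]
  push_cast
  module

end UF

namespace UF

set_option maxHeartbeats 2000000

lemma Rch_add (A : ℝ) (X Y : Mat4) : Rch A (X + Y) = Rch A X + Rch A Y := by
  unfold Rch
  simp only [Matrix.mul_add, Matrix.add_mul]
  abel

lemma Rch_smul (A : ℝ) (c : ℂ) (X : Mat4) : Rch A (c • X) = c • Rch A X := by
  unfold Rch
  simp only [Matrix.mul_smul, Matrix.smul_mul, smul_add]

lemma Rch_u1 {A : ℝ} (hA : |A| ≤ 1) (u : Mat2) :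
    Rch A (u ⊗ₖ (1:Mat2)) = u ⊗ₖ (1:Mat2) + (A:ℂ) • (u ⊗ₖ σ1) := by
  unfold Rch K0 K1 K2 K3
  simp only [Matrix.conjTranspose_smul, kron_conjT, Matrix.conjTranspose_one,
    Matrix.smul_mul, Matrix.mul_smul, smul_smul, ← Matrix.mul_kronecker_mul,
    one_mul, mul_one]
  rw [rp_sq hA, rm_sq hA]
  have f0 : (!![1,0;1,0] : Mat2) * (!![1,0;1,0] : Mat2)ᴴ = (1:Mat2) + σ1 := by
    ext i j; fin_cases i <;> fin_cases j <;>
      simp [σ1, Matrix.mul_apply, Fin.sum_univ_two, Matrix.conjTranspose_apply,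
        Matrix.one_apply]
  have f1 : (!![0,1;0,1] : Mat2) * (!![0,1;0,1] : Mat2)ᴴ = (1:Mat2) + σ1 := by
    ext i j; fin_cases i <;> fin_cases j <;>
      simp [σ1, Matrix.mul_apply, Fin.sum_univ_two, Matrix.conjTranspose_apply,
        Matrix.one_apply]
  have f2 : (!![1,0;-1,0] : Mat2) * (!![1,0;-1,0] : Mat2)ᴴ = (1:Mat2) - σ1 := by
    ext i j; fin_cases i <;> fin_cases j <;>
      simp [σ1, Matrix.mul_apply, Fin.sum_univ_two, Matrix.conjTranspose_apply,
        Matrix.one_apply]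
  have f3 : (!![0,1;0,-1] : Mat2) * (!![0,1;0,-1] : Mat2)ᴴ = (1:Mat2) - σ1 := by
    ext i j; fin_cases i <;> fin_cases j <;>
      simp [σ1, Matrix.mul_apply, Fin.sum_univ_two, Matrix.conjTranspose_apply,
        Matrix.one_apply]
  rw [f0, f1, f2, f3]
  simp only [kron_sub, Matrix.kronecker_add]
  push_cast
  module

lemma Lup_chi0 {A c3 : ℝ} (hA : |A| ≤ 1) :
    CN * (Rch A (CN * BD 0 0 c3 * CN)) * CN = BD A (-(A*c3)) c3 := by
  have s1 : CN * BD 0 0 c3 * CN = (4⁻¹:ℂ) • ((1:Mat4) + (c3:ℂ) • (σ3 ⊗ₖ (1:Mat2))) := by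
    rw [BD_axis3, pm_sigma3, Matrix.mul_smul, Matrix.smul_mul]
    congr 1
    rw [Matrix.mul_add, Matrix.add_mul, mul_one, CN_sq, Matrix.mul_smul, Matrix.smul_mul,
      CN_conj_zz]
  rw [s1, Rch_smul, Rch_add, Rch_smul]
  have e1 : Rch A (1:Mat4) = (1:Mat4) + (A:ℂ) • ((1:Mat2) ⊗ₖ σ1) := by
    conv_lhs => rw [one4_kron]
    rw [Rch_u1 hA 1, ← one4_kron]
  rw [e1, Rch_u1 hA σ3]
  simp only [Matrix.mul_smul, Matrix.smul_mul, Matrix.mul_add, Matrix.add_mul]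
  rw [mul_one, CN_sq, CN_conj_x2, CN_conj_z1, CN_conj_zx, BD]
  push_cast
  module

lemma Lup_I4 {A : ℝ} (hA : |A| ≤ 1) :
    CN * (Rch A (CN * BD 0 0 0 * CN)) * CN = BD A 0 0 := by
  have s1 : CN * BD 0 0 0 * CN = (4⁻¹:ℂ) • (1:Mat4) := by
    rw [BD_zero, Matrix.mul_smul, Matrix.smul_mul, mul_one, CN_sq]
  rw [s1, Rch_smul]
  have e1 : Rch A (1:Mat4) = (1:Mat4) + (A:ℂ) • ((1:Mat2) ⊗ₖ σ1) := by
    conv_lhs => rw [one4_kron]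
    rw [Rch_u1 hA 1, ← one4_kron]
  rw [e1]
  simp only [Matrix.mul_smul, Matrix.smul_mul, Matrix.mul_add, Matrix.add_mul]
  rw [mul_one, CN_sq, CN_conj_x2, BD]
  push_cast
  module

/-! ### the classical witness state BD A 0 0 -/

def r2 : ℂ := (((Real.sqrt 2 : ℝ)) : ℂ)⁻¹

lemma r2_mul : r2 * r2 = 2⁻¹ := by
  rw [r2, ← mul_inv, ← Complex.ofReal_mul, Real.mul_self_sqrt (by norm_num)]
  norm_num

lemma r2_conj : (starRingEnd ℂ) r2 = r2 := by
  rw [r2, map_inv₀, Complex.conj_ofReal]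

def xv : Fin 2 → Fin 2 → ℂ := ![![r2, r2], ![r2, -r2]]

lemma xv_orth : ∀ i i', ∑ k, (starRingEnd ℂ) (xv i k) * xv i' k
    = if i = i' then 1 else 0 := by
  intro i i'
  fin_cases i <;> fin_cases i' <;>
    simp [xv, Fin.sum_univ_two, r2_conj, map_neg] <;>
    norm_num [r2_mul, neg_mul, mul_neg]

lemma xv0_outer : Matrix.vecMulVec (xv 0) (star (xv 0)) = (2⁻¹:ℂ) • ((1:Mat2) + σ1) := by
  ext i j
  fin_cases i <;> fin_cases j <;>
    simp [xv, σ1, Matrix.vecMulVec_apply, Matrix.one_apply, r2_conj] <;>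
    norm_num [r2_mul]

lemma xv1_outer : Matrix.vecMulVec (xv 1) (star (xv 1)) = (2⁻¹:ℂ) • ((1:Mat2) - σ1) := by
  ext i j
  fin_cases i <;> fin_cases j <;>
    simp [xv, σ1, Matrix.vecMulVec_apply, Matrix.one_apply, r2_conj] <;>
    norm_num [r2_mul]

lemma isClassical_BD_axis1 (A : ℝ) (hA : |A| ≤ 1) : IsClassical (BD A 0 0) := by
  have h1 : -1 ≤ A := (abs_le.mp hA).1
  have h2 : A ≤ 1 := (abs_le.mp hA).2
  refine ⟨fun i j => if i = j then (1+A)/4 else (1-A)/4, xv, xv, ?_, ?_, xv_orth, xv_orth, ?_⟩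
  · intro i j; by_cases h : i = j <;> simp [h] <;> linarith
  · rw [Fin.sum_univ_two, Fin.sum_univ_two, Fin.sum_univ_two]
    norm_num
    try ring
  · rw [Fin.sum_univ_two, Fin.sum_univ_two, Fin.sum_univ_two]
    simp only [xv0_outer, xv1_outer]
    norm_num
    rw [BD_axis1, pm_sigma1]
    simp only [Matrix.kronecker_add, Matrix.add_kronecker, kron_sub, sub_kron,
      Matrix.smul_kronecker, Matrix.kronecker_smul, ← one4_kron]
    push_cast
    module

end UF

namespace UF

set_option maxHeartbeats 2000000

lemma kron_outer (u v : Fin 2 → ℂ) :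
    Matrix.vecMulVec u (star u) ⊗ₖ Matrix.vecMulVec v (star v)
      = Matrix.vecMulVec (fun p : Fin 2 × Fin 2 => u p.1 * v p.2)
          (star (fun p : Fin 2 × Fin 2 => u p.1 * v p.2)) := by
  ext ⟨i,j⟩ ⟨k,l⟩
  simp [Matrix.vecMulVec_apply, Matrix.kroneckerMap_apply, Pi.star_apply]
  ring

lemma trace_outer {v : Fin 2 → ℂ}
    (hv : ∑ k, (starRingEnd ℂ) (v k) * v k = 1) :
    (Matrix.vecMulVec v (star v)).trace = 1 := by
  rw [Matrix.trace, ← hv]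
  refine Finset.sum_congr rfl fun k _ => ?_
  simp [Matrix.diag, Matrix.vecMulVec_apply, Pi.star_apply, mul_comm]

lemma isClassical_density {χ : Mat4} (h : IsClassical χ) : IsDensityMatrix χ := by
  obtain ⟨p, a, b, hp, hp1, ha, hb, rfl⟩ := h
  constructor
  · rw [Fin.sum_univ_two, Fin.sum_univ_two, Fin.sum_univ_two]
    refine Matrix.PosSemidef.add (Matrix.PosSemidef.add ?_ ?_)
      (Matrix.PosSemidef.add ?_ ?_) <;>
      (rw [kron_outer]; exact psd_smul (psd_outer _) (hp _ _))
  · rw [Matrix.trace_sum]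
    have hti : ∀ i : Fin 2, (Matrix.vecMulVec (a i) (star (a i))).trace = 1 := by
      intro i
      refine trace_outer ?_
      have := ha i i
      simpa using this
    have htj : ∀ j : Fin 2, (Matrix.vecMulVec (b j) (star (b j))).trace = 1 := by
      intro j
      refine trace_outer ?_
      have := hb j j
      simpa using this
    calc ∑ i, (∑ j, (p i j : ℂ) • (Matrix.vecMulVec (a i) (star (a i)) ⊗ₖ
            Matrix.vecMulVec (b j) (star (b j)))).trace
        = ∑ i, ∑ j, (p i j : ℂ) := by
          refine Finset.sum_congr rfl fun i _ => ?_
          rw [Matrix.trace_sum]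
          refine Finset.sum_congr rfl fun j _ => ?_
          rw [Matrix.trace_smul, Matrix.trace_kronecker, hti, htj, mul_one, smul_eq_mul,
            mul_one]
      _ = 1 := by
          push_cast
          exact_mod_cast congrArg (fun x : ℝ => (x:ℂ)) hp1

lemma upper_bound {D : Mat4 → Mat4 → ℝ} (hD : Contractive D) {A c3 : ℝ}
    (hA : |A| ≤ 1) (hc3 : |c3| ≤ 1) :
    D (BD A (-(A*c3)) c3) (BD A 0 0) ≤ D (BD 0 0 c3) (BD 0 0 0) := by
  have hconj : IsCPTP (fun X : Mat4 => CN * X * CN) := by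
    have h0 := isCPTP_conj (V := CN) (by rw [CN_herm, CN_sq])
    simpa only [CN_herm] using h0
  have hcptp : IsCPTP (fun X : Mat4 => CN * (Rch A (CN * X * CN)) * CN) :=
    cptp_comp hconj (cptp_comp (isCPTP_Rch A hA) hconj)
  have hd1 : IsDensityMatrix (BD 0 0 c3) := by
    have := isDensity_BD 0 c3 (by norm_num) hc3
    simpa using this
  have hd0 : IsDensityMatrix (BD 0 0 0) := by
    have := isDensity_BD 0 0 (by norm_num) (by norm_num)
    simpa using this
  have h2 : D (CN * (Rch A (CN * BD 0 0 c3 * CN)) * CN)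
      (CN * (Rch A (CN * BD 0 0 0 * CN)) * CN) ≤ D (BD 0 0 c3) (BD 0 0 0) :=
    hD _ hcptp _ _ hd1 hd0
  rwa [Lup_chi0 hA, Lup_I4 hA] at h2

end UF

namespace UF

set_option maxHeartbeats 2000000

/-! ### classical bases in Bloch form -/

lemma basis_complete {v : Fin 2 → Fin 2 → ℂ}
    (hv : ∀ i i', ∑ k, (starRingEnd ℂ) (v i k) * v i' k = if i = i' then 1 else 0) :
    Matrix.vecMulVec (v 0) (star (v 0)) + Matrix.vecMulVec (v 1) (star (v 1)) = 1 := by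
  set W : Mat2 := Matrix.of (fun i k => (starRingEnd ℂ) (v i k)) with hW
  have h1 : W * Wᴴ = 1 := by
    ext i i'
    rw [Matrix.mul_apply]
    have : ∀ k, W i k * Wᴴ k i' = (starRingEnd ℂ) (v i k) * v i' k := by
      intro k
      simp [hW, Matrix.conjTranspose_apply]
    simp_rw [this]
    rw [hv i i']
    simp [Matrix.one_apply]
  have h2 := mul_eq_one_comm.mp h1
  ext k l
  have h3 := congrFun (congrFun h2 k) l
  rw [Matrix.mul_apply] at h3
  have : ∀ i, Wᴴ k i * W i l = v i k * (starRingEnd ℂ) (v i l) := by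
    intro i
    simp [hW, Matrix.conjTranspose_apply, mul_comm]
  simp_rw [this] at h3
  rw [Fin.sum_univ_two] at h3
  simpa [Matrix.vecMulVec_apply, Pi.star_apply] using h3

lemma basis_pm {v : Fin 2 → Fin 2 → ℂ}
    (hv : ∀ i i', ∑ k, (starRingEnd ℂ) (v i k) * v i' k = if i = i' then 1 else 0) :
    ∃ m1 m2 m3 : ℝ,
      Matrix.vecMulVec (v 0) (star (v 0)) = (2⁻¹:ℂ) • ((1:Mat2) + pm m1 m2 m3) ∧
      Matrix.vecMulVec (v 1) (star (v 1)) = (2⁻¹:ℂ) • ((1:Mat2) - pm m1 m2 m3) := by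
  have hn : Complex.normSq (v 0 0) + Complex.normSq (v 0 1) = 1 := by
    have h00 := hv 0 0
    rw [Fin.sum_univ_two] at h00
    simp only [if_pos rfl] at h00
    have e0 : (starRingEnd ℂ) (v 0 0) * v 0 0 = (Complex.normSq (v 0 0) : ℂ) := by
      rw [mul_comm, Complex.mul_conj]
    have e1 : (starRingEnd ℂ) (v 0 1) * v 0 1 = (Complex.normSq (v 0 1) : ℂ) := by
      rw [mul_comm, Complex.mul_conj]
    rw [e0, e1] at h00
    norm_num at h00
    exact_mod_cast h00
  refine ⟨2*(v 0 1 * (starRingEnd ℂ) (v 0 0)).re, 2*(v 0 1 * (starRingEnd ℂ) (v 0 0)).im,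
    2*Complex.normSq (v 0 0) - 1, ?_, ?_⟩
  · ext i j
    fin_cases i <;> fin_cases j <;>
      simp [Matrix.vecMulVec_apply, Pi.star_apply, pm, Matrix.one_apply, Complex.ext_iff,
        Complex.normSq_apply, Complex.mul_re, Complex.mul_im] <;>
      (try constructor) <;>
      first
        | trivial
        | nlinarith [hn, Complex.normSq_apply (v 0 0), Complex.normSq_apply (v 0 1)]
  · have hc := basis_complete hv
    have : Matrix.vecMulVec (v 1) (star (v 1))
        = 1 - Matrix.vecMulVec (v 0) (star (v 0)) := by
      rw [← hc]; abel
    rw [this]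
    have h0 : Matrix.vecMulVec (v 0) (star (v 0)) = (2⁻¹:ℂ) • ((1:Mat2)
        + pm (2*(v 0 1 * (starRingEnd ℂ) (v 0 0)).re)
             (2*(v 0 1 * (starRingEnd ℂ) (v 0 0)).im) (2*Complex.normSq (v 0 0) - 1)) := by
      ext i j
      fin_cases i <;> fin_cases j <;>
        simp [Matrix.vecMulVec_apply, Pi.star_apply, pm, Matrix.one_apply, Complex.ext_iff,
          Complex.normSq_apply, Complex.mul_re, Complex.mul_im] <;>
        (try constructor) <;>
        first
          | trivial
          | nlinarith [hn, Complex.normSq_apply (v 0 0), Complex.normSq_apply (v 0 1)]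
    rw [h0]
    module

end UF

namespace UF

set_option maxHeartbeats 2000000

lemma flipP_smul (s t : Mat2) (c : ℂ) (X : Mat4) :
    flipP s t (c • X) = c • flipP s t X := by
  unfold flipP
  rw [Matrix.mul_smul, Matrix.smul_mul, ← smul_add, smul_comm]

lemma flipP_add (s t : Mat2) (X Y : Mat4) :
    flipP s t (X + Y) = flipP s t X + flipP s t Y := by
  unfold flipP
  rw [Matrix.mul_add, Matrix.add_mul, ← smul_add]
  congr 1
  abel

lemma pm_smul (r x y z : ℝ) : pm (r*x) (r*y) (r*z) = (r:ℂ) • pm x y z := by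
  ext i j
  fin_cases i <;> fin_cases j <;> simp [pm, Complex.ext_iff] <;> ring

/-- dephasing flip on qubit A -/
lemma flipA_gen (d1 d3 m1 m2 m3 : ℝ) (hdu : d1^2 + 0^2 + d3^2 = 1) (c : ℂ) (B : Mat2) :
    flipP (pm d1 0 d3) 1 (((2⁻¹:ℂ) • ((1:Mat2) + c • pm m1 m2 m3)) ⊗ₖ B)
      = ((2⁻¹:ℂ) • ((1:Mat2) + (c * ((d1*m1+0*m2+d3*m3 : ℝ):ℂ)) • pm d1 0 d3)) ⊗ₖ B := by
  unfold flipP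
  rw [kron_conj]
  rw [one_mul, mul_one]
  have hsq := pm_sq d1 0 d3 hdu
  have hcj := pm_conj d1 0 d3 m1 m2 m3 hdu
  have inner : pm d1 0 d3 * ((2⁻¹:ℂ) • ((1:Mat2) + c • pm m1 m2 m3)) * pm d1 0 d3
      = (2⁻¹:ℂ) • ((1:Mat2) + c • (((2*(d1*m1+0*m2+d3*m3) : ℝ):ℂ) • pm d1 0 d3
          - pm m1 m2 m3)) := by
    rw [Matrix.mul_smul, Matrix.smul_mul, Matrix.mul_add, Matrix.add_mul, mul_one, hsq,
      Matrix.mul_smul, Matrix.smul_mul, hcj]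
  rw [inner]
  simp only [Matrix.smul_kronecker, Matrix.add_kronecker, Matrix.kronecker_smul,
    sub_kron, Matrix.kronecker_add]
  push_cast
  module

/-- dephasing flip on qubit B -/
lemma flipB_gen (e1 e3 n1 n2 n3 : ℝ) (heu : e1^2 + 0^2 + e3^2 = 1) (c : ℂ) (u : Mat2) :
    flipP 1 (pm e1 0 e3) (u ⊗ₖ ((2⁻¹:ℂ) • ((1:Mat2) + c • pm n1 n2 n3)))
      = u ⊗ₖ ((2⁻¹:ℂ) • ((1:Mat2) + (c * ((e1*n1+0*n2+e3*n3 : ℝ):ℂ)) • pm e1 0 e3)) := by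
  unfold flipP
  rw [kron_conj]
  rw [one_mul, mul_one]
  have hsq := pm_sq e1 0 e3 heu
  have hcj := pm_conj e1 0 e3 n1 n2 n3 heu
  have inner : pm e1 0 e3 * ((2⁻¹:ℂ) • ((1:Mat2) + c • pm n1 n2 n3)) * pm e1 0 e3
      = (2⁻¹:ℂ) • ((1:Mat2) + c • (((2*(e1*n1+0*n2+e3*n3) : ℝ):ℂ) • pm e1 0 e3
          - pm n1 n2 n3)) := by
    rw [Matrix.mul_smul, Matrix.smul_mul, Matrix.mul_add, Matrix.add_mul, mul_one, hsq,
      Matrix.mul_smul, Matrix.smul_mul, hcj]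
  rw [inner]
  simp only [Matrix.smul_kronecker, Matrix.add_kronecker, Matrix.kronecker_smul,
    kron_sub, Matrix.kronecker_add]
  push_cast
  module

/-- the σ₂⊗σ₂ flip on product states with Bloch vectors in the xz plane -/
lemma flipY_gen (d1 d3 e1 e3 : ℝ) (c1 c2 : ℂ) :
    flipP (pm 0 1 0) (pm 0 1 0)
      (((2⁻¹:ℂ) • ((1:Mat2) + c1 • pm d1 0 d3)) ⊗ₖ ((2⁻¹:ℂ) • ((1:Mat2) + c2 • pm e1 0 e3)))
      = (4⁻¹:ℂ) • ((1:Mat4) + (c1*c2) • (pm d1 0 d3 ⊗ₖ pm e1 0 e3)) := by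
  unfold flipP
  rw [kron_conj]
  have hy : (0:ℝ)^2 + 1^2 + 0^2 = 1 := by norm_num
  have hsq := pm_sq 0 1 0 hy
  have hcd := pm_conj 0 1 0 d1 0 d3 hy
  have hce := pm_conj 0 1 0 e1 0 e3 hy
  rw [show ((2*(0*d1+1*0+0*d3) : ℝ):ℂ) = 0 by norm_num] at hcd
  rw [show ((2*(0*e1+1*0+0*e3) : ℝ):ℂ) = 0 by norm_num] at hce
  rw [zero_smul, zero_sub] at hcd hce
  have innerd : pm 0 1 0 * ((2⁻¹:ℂ) • ((1:Mat2) + c1 • pm d1 0 d3)) * pm 0 1 0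
      = (2⁻¹:ℂ) • ((1:Mat2) - c1 • pm d1 0 d3) := by
    rw [Matrix.mul_smul, Matrix.smul_mul, Matrix.mul_add, Matrix.add_mul, mul_one, hsq,
      Matrix.mul_smul, Matrix.smul_mul, hcd]
    rw [smul_neg, ← sub_eq_add_neg]
  have innere : pm 0 1 0 * ((2⁻¹:ℂ) • ((1:Mat2) + c2 • pm e1 0 e3)) * pm 0 1 0
      = (2⁻¹:ℂ) • ((1:Mat2) - c2 • pm e1 0 e3) := by
    rw [Matrix.mul_smul, Matrix.smul_mul, Matrix.mul_add, Matrix.add_mul, mul_one, hsq,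
      Matrix.mul_smul, Matrix.smul_mul, hce]
    rw [smul_neg, ← sub_eq_add_neg]
  rw [innerd, innere]
  simp only [Matrix.smul_kronecker, Matrix.add_kronecker, Matrix.kronecker_smul,
    sub_kron, kron_sub, Matrix.kronecker_add, ← one4_kron]
  module

end UF

namespace UF

set_option maxHeartbeats 2000000

lemma flipA_kron (d1 d3 x1 x2 x3 : ℝ) (hdu : d1^2 + 0^2 + d3^2 = 1) (B : Mat2) :
    flipP (pm d1 0 d3) 1 (pm x1 x2 x3 ⊗ₖ B)
      = ((d1*x1+0*x2+d3*x3 : ℝ):ℂ) • (pm d1 0 d3 ⊗ₖ B) := by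
  unfold flipP
  rw [kron_conj]
  simp only [one_mul, mul_one]
  rw [pm_conj d1 0 d3 x1 x2 x3 hdu]
  simp only [sub_kron, Matrix.smul_kronecker]
  push_cast
  module

lemma flipB_kron (e1 e3 y1 y2 y3 : ℝ) (heu : e1^2 + 0^2 + e3^2 = 1) (u : Mat2) :
    flipP 1 (pm e1 0 e3) (u ⊗ₖ pm y1 y2 y3)
      = ((e1*y1+0*y2+e3*y3 : ℝ):ℂ) • (u ⊗ₖ pm e1 0 e3) := by
  unfold flipP
  rw [kron_conj]
  simp only [one_mul, mul_one]
  rw [pm_conj e1 0 e3 y1 y2 y3 heu]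
  simp only [kron_sub, Matrix.kronecker_smul]
  push_cast
  module

lemma flipY_kron (x1 x3 y1 y3 : ℝ) :
    flipP (pm 0 1 0) (pm 0 1 0) (pm x1 0 x3 ⊗ₖ pm y1 0 y3) = pm x1 0 x3 ⊗ₖ pm y1 0 y3 := by
  unfold flipP
  have hy : (0:ℝ)^2 + 1^2 + 0^2 = 1 := by norm_num
  rw [kron_conj, pm_conj 0 1 0 x1 0 x3 hy, pm_conj 0 1 0 y1 0 y3 hy]
  rw [show ((2*(0*x1+1*0+0*x3) : ℝ):ℂ) = 0 by norm_num,
    show ((2*(0*y1+1*0+0*y3) : ℝ):ℂ) = 0 by norm_num]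
  simp only [zero_smul, zero_sub, neg_kron, kron_neg, neg_neg]
  rw [← two_smul ℂ, smul_smul]
  norm_num

lemma one2_sq : (1:Mat2) * 1 = 1 := one_mul 1

lemma rho_steps (A' c3' d1 d3 e1 e3 : ℝ) (hdu : d1^2 + 0^2 + d3^2 = 1)
    (heu : e1^2 + 0^2 + e3^2 = 1) :
    flipP (pm 0 1 0) (pm 0 1 0)
      (flipP 1 (pm e1 0 e3) (flipP (pm d1 0 d3) 1 (BD A' (-(A'*c3')) c3')))
      = (4⁻¹:ℂ) • ((1:Mat4)
          + ((A'*d1*e1 + c3'*d3*e3 : ℝ):ℂ) • (pm d1 0 d3 ⊗ₖ pm e1 0 e3)) := by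
  have hy : (0:ℝ)^2 + 1^2 + 0^2 = 1 := by norm_num
  rw [BD_pm]
  simp only [flipP_add, flipP_smul]
  rw [flipP_one (pm_sq _ _ _ hdu) one2_sq,
    flipA_kron d1 d3 1 0 0 hdu, flipA_kron d1 d3 0 1 0 hdu, flipA_kron d1 d3 0 0 1 hdu]
  simp only [flipP_add, flipP_smul]
  rw [flipP_one one2_sq (pm_sq _ _ _ heu),
    flipB_kron e1 e3 1 0 0 heu, flipB_kron e1 e3 0 1 0 heu, flipB_kron e1 e3 0 0 1 heu]
  simp only [flipP_add, flipP_smul]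
  rw [flipP_one (pm_sq _ _ _ hy) (pm_sq _ _ _ hy)]
  simp only [flipY_kron]
  push_cast
  module

def depol : Mat4 → Mat4 := fun X =>
  flipP (pm 1 0 0) 1 (flipP 1 (pm 1 0 0) (flipP (pm 0 0 1) 1 (flipP 1 (pm 0 0 1) X)))

lemma hx_unit : (1:ℝ)^2 + 0^2 + 0^2 = 1 := by norm_num
lemma hz_unit : (0:ℝ)^2 + 0^2 + 1^2 = 1 := by norm_num

lemma isCPTP_depol : IsCPTP depol := by
  unfold depol
  exact cptp_comp (isCPTP_flipP (pm_herm _ _ _) (Matrix.conjTranspose_one)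
      (pm_sq _ _ _ hx_unit) one2_sq)
    (cptp_comp (isCPTP_flipP (Matrix.conjTranspose_one) (pm_herm _ _ _)
        one2_sq (pm_sq _ _ _ hx_unit))
      (cptp_comp (isCPTP_flipP (pm_herm _ _ _) (Matrix.conjTranspose_one)
          (pm_sq _ _ _ hz_unit) one2_sq)
        (isCPTP_flipP (Matrix.conjTranspose_one) (pm_herm _ _ _)
          one2_sq (pm_sq _ _ _ hz_unit))))

lemma depol_one4 : depol ((4⁻¹:ℂ) • (1:Mat4)) = (4⁻¹:ℂ) • (1:Mat4) := by
  unfold depol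
  rw [flipP_smul, flipP_one one2_sq (pm_sq _ _ _ hz_unit),
    flipP_smul, flipP_one (pm_sq _ _ _ hz_unit) one2_sq,
    flipP_smul, flipP_one one2_sq (pm_sq _ _ _ hx_unit),
    flipP_smul, flipP_one (pm_sq _ _ _ hx_unit) one2_sq]

lemma depol_state (v : ℂ) (d1 d3 e1 e3 : ℝ) (hdu : d1^2 + 0^2 + d3^2 = 1)
    (heu : e1^2 + 0^2 + e3^2 = 1) :
    depol ((4⁻¹:ℂ) • ((1:Mat4) + v • (pm d1 0 d3 ⊗ₖ pm e1 0 e3)))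
      = (4⁻¹:ℂ) • (1:Mat4) := by
  unfold depol
  simp only [flipP_add, flipP_smul]
  rw [flipP_one one2_sq (pm_sq _ _ _ hz_unit), flipB_kron 0 1 e1 0 e3 hz_unit]
  simp only [flipP_add, flipP_smul]
  rw [flipP_one (pm_sq _ _ _ hz_unit) one2_sq, flipA_kron 0 1 d1 0 d3 hz_unit]
  simp only [flipP_add, flipP_smul]
  rw [flipP_one one2_sq (pm_sq _ _ _ hx_unit), flipB_kron 1 0 0 0 1 hx_unit]
  simp only [flipP_add, flipP_smul]
  rw [flipP_one (pm_sq _ _ _ hx_unit) one2_sq, flipA_kron 1 0 0 0 1 hx_unit]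
  push_cast
  module

lemma conjG_one (g h : Mat2) (hg : g * gᴴ = 1) (hh : h * hᴴ = 1) :
    (g ⊗ₖ h) * ((4⁻¹:ℂ) • (1:Mat4)) * (g ⊗ₖ h)ᴴ = (4⁻¹:ℂ) • (1:Mat4) := by
  rw [kron_conjT, Matrix.mul_smul, Matrix.smul_mul, mul_one, ← Matrix.mul_kronecker_mul,
    hg, hh, Matrix.one_kronecker_one]

lemma conjG_state (g h : Mat2) (hg : g * gᴴ = 1) (hh : h * hᴴ = 1) (v : ℂ) (P Q : Mat2) :
    (g ⊗ₖ h) * ((4⁻¹:ℂ) • ((1:Mat4) + v • (P ⊗ₖ Q))) * (g ⊗ₖ h)ᴴ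
      = (4⁻¹:ℂ) • ((1:Mat4) + v • ((g*P*gᴴ) ⊗ₖ (h*Q*hᴴ))) := by
  rw [kron_conjT]
  simp only [Matrix.mul_smul, Matrix.smul_mul, Matrix.mul_add, Matrix.add_mul, mul_one,
    ← Matrix.mul_kronecker_mul]
  rw [hg, hh, Matrix.one_kronecker_one]

end UF

namespace UF

set_option maxHeartbeats 2000000

lemma depol_BD (w1 w2 w3 : ℝ) : depol (BD w1 w2 w3) = (4⁻¹:ℂ) • (1:Mat4) := by
  unfold depol
  rw [BD_pm]
  simp only [flipP_add, flipP_smul]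
  rw [flipP_one one2_sq (pm_sq _ _ _ hz_unit),
    flipB_kron 0 1 1 0 0 hz_unit, flipB_kron 0 1 0 1 0 hz_unit,
    flipB_kron 0 1 0 0 1 hz_unit]
  simp only [flipP_add, flipP_smul]
  rw [flipP_one (pm_sq _ _ _ hz_unit) one2_sq,
    flipA_kron 0 1 1 0 0 hz_unit, flipA_kron 0 1 0 1 0 hz_unit,
    flipA_kron 0 1 0 0 1 hz_unit]
  simp only [flipP_add, flipP_smul]
  rw [flipP_one one2_sq (pm_sq _ _ _ hx_unit)]
  simp only [flipB_kron 1 0 0 0 1 hx_unit]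
  simp only [flipP_add, flipP_smul]
  rw [flipP_one (pm_sq _ _ _ hx_unit) one2_sq]
  simp only [flipA_kron 1 0 0 0 1 hx_unit]
  push_cast
  module

lemma exists_d (m1 m3 : ℝ) :
    ∃ d1 d3 : ℝ, d1^2 + 0^2 + d3^2 = 1 ∧ d1*m1 + d3*m3 = 0 ∧ 0 ≤ d3 := by
  by_cases h : m1 = 0
  · exact ⟨1, 0, by norm_num, by simp [h], le_refl 0⟩
  · have hm1 : 0 < m1^2 := by positivity
    have hNN : (0:ℝ) < m1^2 + m3^2 := by nlinarith [sq_nonneg m3]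
    set N := Real.sqrt (m1^2 + m3^2) with hN
    have hN2 : N^2 = m1^2 + m3^2 := Real.sq_sqrt (le_of_lt hNN)
    have hNpos : 0 < N := Real.sqrt_pos.mpr hNN
    have hNne : N ≠ 0 := ne_of_gt hNpos
    have habs2 : |m1|^2 = m1^2 := sq_abs m1
    refine ⟨-(|m1|/m1*m3)/N, |m1|/N, ?_, ?_, by positivity⟩
    · field_simp
      linear_combination (m3^2 + m1^2)*habs2 - m1^2*hN2
    · field_simp
      ring_nf
      try nlinarith [abs_mul_self m1]

end UF

namespace UF

set_option maxHeartbeats 4000000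

lemma lower_bound {D : Mat4 → Mat4 → ℝ} (hD : Contractive D) {A c3 : ℝ}
    (hA : |A| ≤ 1) (hCA : |c3| ≤ |A|) {χ : Mat4} (hχ : IsClassical χ) :
    D (BD 0 0 c3) (BD 0 0 0) ≤ D (BD A (-(A*c3)) c3) χ := by
  have hχd := isClassical_density hχ
  have hc31 : |c3| ≤ 1 := le_trans hCA hA
  have hρd : IsDensityMatrix (BD A (-(A*c3)) c3) := isDensity_BD A c3 hA hc31
  obtain ⟨p, a, b, hp, hp1, ha, hb, hχeq⟩ := hχ
  rw [Fin.sum_univ_two, Fin.sum_univ_two, Fin.sum_univ_two] at hp1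
  obtain ⟨m1, m2, m3, hA0, hA1⟩ := basis_pm ha
  obtain ⟨n1, n2, n3, hB0, hB1⟩ := basis_pm hb
  have hA0' : Matrix.vecMulVec (a 0) (star (a 0))
      = (2⁻¹:ℂ) • ((1:Mat2) + (1:ℂ) • pm m1 m2 m3) := by rw [hA0]; module
  have hA1' : Matrix.vecMulVec (a 1) (star (a 1))
      = (2⁻¹:ℂ) • ((1:Mat2) + (-1:ℂ) • pm m1 m2 m3) := by rw [hA1]; module
  have hB0' : Matrix.vecMulVec (b 0) (star (b 0))
      = (2⁻¹:ℂ) • ((1:Mat2) + (1:ℂ) • pm n1 n2 n3) := by rw [hB0]; module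
  have hB1' : Matrix.vecMulVec (b 1) (star (b 1))
      = (2⁻¹:ℂ) • ((1:Mat2) + (-1:ℂ) • pm n1 n2 n3) := by rw [hB1]; module
  have hp1c : ((p 0 0 : ℂ) + p 0 1 + (p 1 0 + p 1 1)) = 1 := by
    push_cast
    exact_mod_cast congrArg (fun x : ℝ => (x:ℂ)) hp1
  by_cases hc30 : c3 = 0
  · subst hc30
    have h2 := hD depol isCPTP_depol _ _ hρd hχd
    have hρv : depol (BD A (-(A*0)) 0) = (4⁻¹:ℂ) • (1:Mat4) := depol_BD _ _ _
    have hχv : depol χ = (4⁻¹:ℂ) • (1:Mat4) := by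
      rw [hχeq, Fin.sum_univ_two, Fin.sum_univ_two, Fin.sum_univ_two,
        hA0', hA1', hB0', hB1']
      unfold depol
      simp only [flipP_add, flipP_smul]
      simp only [flipB_gen 0 1 n1 n2 n3 hz_unit]
      simp only [flipA_gen 0 1 m1 m2 m3 hz_unit]
      simp only [flipB_gen 1 0 0 0 1 hx_unit]
      simp only [flipA_gen 1 0 0 0 1 hx_unit]
      have coll : ∀ cA cB : ℂ,
          ((2⁻¹:ℂ) • ((1:Mat2) + (cA * ((1*0+0*0+0*1 : ℝ):ℂ)) • pm 1 0 0)) ⊗ₖ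
            ((2⁻¹:ℂ) • ((1:Mat2) + (cB * ((1*0+0*0+0*1 : ℝ):ℂ)) • pm 1 0 0))
          = (4⁻¹:ℂ) • (1:Mat4) := by
        intro cA cB
        norm_num
        simp only [Matrix.smul_kronecker, Matrix.kronecker_smul, ← one4_kron, smul_smul]
        norm_num
      simp only [coll]
      rw [← add_smul, ← add_smul, ← add_smul, hp1c, one_smul]
    rw [hρv, hχv] at h2
    rw [← BD_zero] at h2
    exact h2
  · -- main case
    obtain ⟨d1, d3, hdu, hdp, hd3⟩ := exists_d m1 m3
    have hd13 : d1^2 + d3^2 = 1 := by nlinarith [hdu]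
    have hA2 : c3^2 ≤ A^2 := by
      have := pow_le_pow_left₀ (abs_nonneg c3) hCA 2
      rwa [sq_abs, sq_abs] at this
    have hc3sq : (0:ℝ) < c3^2 := by positivity
    have hkey : c3^2*d1^2 ≤ A^2*d1^2 := by nlinarith [sq_nonneg d1]
    have hLsq : (0:ℝ) < (A*d1)^2 + (c3*d3)^2 := by nlinarith [hkey, hd13, hc3sq]
    set L := Real.sqrt ((A*d1)^2 + (c3*d3)^2) with hLdef
    have hLpos : 0 < L := Real.sqrt_pos.mpr hLsq
    have hLne : L ≠ 0 := ne_of_gt hLpos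
    have hL2 : L^2 = (A*d1)^2 + (c3*d3)^2 := Real.sq_sqrt (le_of_lt hLsq)
    set e1 := A*d1/L with he1def
    set e3 := c3*d3/L with he3def
    have heu : e1^2 + 0^2 + e3^2 = 1 := by
      rw [he1def, he3def]
      field_simp
      first
        | linear_combination hL2
        | linear_combination -2*hL2
        | linear_combination 2*hL2
        | linear_combination -hL2
    have hLe : A*d1*e1 + c3*d3*e3 = L := by
      rw [he1def, he3def]
      field_simp
      first
        | linear_combination hL2
        | linear_combination -2*hL2
        | linear_combination 2*hL2
        | linear_combination -hL2
        | linear_combination L*hL2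
        | linear_combination -L*hL2
    have hLge : |c3| ≤ L := by
      rw [hLdef, show |c3| = Real.sqrt (c3^2) by rw [Real.sqrt_sq_eq_abs]]
      apply Real.sqrt_le_sqrt
      nlinarith [hkey, hd13]
    set κ := |c3|/L with hκdef
    have hκ0 : 0 ≤ κ := by positivity
    have hκ1 : κ ≤ 1 := by rw [hκdef]; exact (div_le_one hLpos).mpr hLge
    have hκL : κ*L = |c3| := by rw [hκdef]; field_simp
    set s3 : ℝ := if c3 < 0 then -1 else 1 with hs3def
    have hs3c : s3 * |c3| = c3 := by
      rw [hs3def]; split_ifs with h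
      · rw [abs_of_neg h]; ring
      · rw [abs_of_nonneg (not_lt.mp h)]; ring
    have hs3sq : s3 * s3 = 1 := by rw [hs3def]; split_ifs <;> norm_num
    have hs3c' : s3 * c3 = |c3| := by
      rw [hs3def]; split_ifs with h
      · rw [abs_of_neg h]; ring
      · rw [abs_of_nonneg (not_lt.mp h)]; ring
    set f1 := s3*e1 with hf1def
    set f3 := s3*e3 with hf3def
    have hfu : f1^2 + 0^2 + f3^2 = 1 := by
      rw [hf1def, hf3def]
      linear_combination (e1^2+e3^2)*hs3sq + heu
    have hf13 : f1^2 + f3^2 = 1 := by nlinarith [hfu]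
    have hf3 : 0 ≤ f3 := by
      rw [hf3def, he3def, show s3*(c3*d3/L) = (s3*c3)*d3/L by ring, hs3c']
      exact div_nonneg (mul_nonneg (abs_nonneg c3) hd3) (le_of_lt hLpos)
    -- rotation g
    set cg := Real.sqrt ((1+d3)/2) with hcgdef
    have hcg2 : cg^2 = (1+d3)/2 := Real.sq_sqrt (by linarith)
    have hcgpos : 0 < cg := Real.sqrt_pos.mpr (by linarith)
    have hcgne : cg ≠ 0 := ne_of_gt hcgpos
    set sg := -d1/(2*cg) with hsgdef
    have hd1sq : d1^2 = 1 - d3^2 := by linarith [hd13]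
    have h1d3 : (0:ℝ) < 1 + d3 := by linarith
    have hsg2 : sg^2 = (1-d3)/2 := by
      rw [hsgdef, div_pow, neg_sq, show (2*cg)^2 = 4*cg^2 by ring, hcg2, hd1sq]
      field_simp
      ring
    have hgu : cg^2 + sg^2 = 1 := by rw [hcg2, hsg2]; ring
    have hgd : cg^2 - sg^2 = d3 := by rw [hcg2, hsg2]; ring
    have hgs : 2*cg*sg = -d1 := by
      rw [hsgdef]
      field_simp
    -- rotation h
    set ch := Real.sqrt ((1+f3)/2) with hchdef
    have hch2 : ch^2 = (1+f3)/2 := Real.sq_sqrt (by linarith)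
    have hchpos : 0 < ch := Real.sqrt_pos.mpr (by linarith)
    have hchne : ch ≠ 0 := ne_of_gt hchpos
    set sh := -f1/(2*ch) with hshdef
    have hf1sq : f1^2 = 1 - f3^2 := by linarith [hf13]
    have h1f3 : (0:ℝ) < 1 + f3 := by linarith
    have hsh2 : sh^2 = (1-f3)/2 := by
      rw [hshdef, div_pow, neg_sq, show (2*ch)^2 = 4*ch^2 by ring, hch2, hf1sq]
      field_simp
      ring
    have hhu : ch^2 + sh^2 = 1 := by rw [hch2, hsh2]; ring
    have hhd : ch^2 - sh^2 = f3 := by rw [hch2, hsh2]; ring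
    have hhs : 2*ch*sh = -f1 := by
      rw [hshdef]
      field_simp
    have hgconj : rotY cg sg * pm d1 0 d3 * (rotY cg sg)ᴴ = pm 0 0 1 :=
      rotY_conj cg sg d1 d3 hd13 hgu hgd hgs
    have hhconj : rotY ch sh * pm f1 0 f3 * (rotY ch sh)ᴴ = pm 0 0 1 :=
      rotY_conj ch sh f1 f3 hf13 hhu hhd hhs
    have hgg : rotY cg sg * (rotY cg sg)ᴴ = 1 := rotY_unitary' _ _ hgu
    have hhh : rotY ch sh * (rotY ch sh)ᴴ = 1 := rotY_unitary' _ _ hhu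
    have hGH : (rotY cg sg ⊗ₖ rotY ch sh)ᴴ * (rotY cg sg ⊗ₖ rotY ch sh) = 1 := by
      rw [kron_conjT, ← Matrix.mul_kronecker_mul, rotY_unitary _ _ hgu,
        rotY_unitary _ _ hhu, Matrix.one_kronecker_one]
    have hy : (0:ℝ)^2 + 1^2 + 0^2 = 1 := by norm_num
    -- the channel (as an explicit function)
    have hΦcptp : IsCPTP (fun X : Mat4 => (rotY cg sg ⊗ₖ rotY ch sh) *
        ((κ:ℂ) • (flipP (pm 0 1 0) (pm 0 1 0)
            (flipP 1 (pm e1 0 e3) (flipP (pm d1 0 d3) 1 X)))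
          + ((1-κ:ℝ):ℂ) • depol (flipP (pm 0 1 0) (pm 0 1 0)
            (flipP 1 (pm e1 0 e3) (flipP (pm d1 0 d3) 1 X))))
        * (rotY cg sg ⊗ₖ rotY ch sh)ᴴ) := by
      have h3 : IsCPTP (fun X : Mat4 => flipP (pm 0 1 0) (pm 0 1 0)
          (flipP 1 (pm e1 0 e3) (flipP (pm d1 0 d3) 1 X))) :=
        cptp_comp (isCPTP_flipP (pm_herm _ _ _) (pm_herm _ _ _)
            (pm_sq _ _ _ hy) (pm_sq _ _ _ hy))
          (cptp_comp (isCPTP_flipP Matrix.conjTranspose_one (pm_herm _ _ _)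
              one2_sq (pm_sq _ _ _ heu))
            (isCPTP_flipP (pm_herm _ _ _) Matrix.conjTranspose_one
              (pm_sq _ _ _ hdu) one2_sq))
      have h4 : IsCPTP (fun X : Mat4 => (κ:ℂ) • X + ((1-κ:ℝ):ℂ) • depol X) :=
        cptp_mix isCPTP_id isCPTP_depol hκ0 hκ1
      exact cptp_comp (isCPTP_conj hGH) (cptp_comp h4 h3)
    -- value on ρ
    have hLe' : ((A*d1*e1 + c3*d3*e3 : ℝ):ℂ) = ((L : ℝ):ℂ) :=
      congrArg Complex.ofReal hLe
    have hκL' : ((κ*L : ℝ):ℂ) = ((|c3| : ℝ):ℂ) := congrArg Complex.ofReal hκL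
    have hpe : pm e1 0 e3 = (s3:ℂ) • pm f1 0 f3 := by
      have he1' : e1 = s3*f1 := by rw [hf1def, ← mul_assoc, hs3sq, one_mul]
      have he3' : e3 = s3*f3 := by rw [hf3def, ← mul_assoc, hs3sq, one_mul]
      conv_lhs => rw [he1', he3']
      rw [show pm (s3*f1) 0 (s3*f3) = pm (s3*f1) (s3*0) (s3*f3) by norm_num, pm_smul]
    have habs3 : ((|c3| : ℝ):ℂ) * (s3:ℂ) = (c3:ℂ) := by
      rw [← Complex.ofReal_mul]
      exact congrArg Complex.ofReal (by rw [mul_comm]; exact hs3c)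
    have hρv : (rotY cg sg ⊗ₖ rotY ch sh) *
        ((κ:ℂ) • (flipP (pm 0 1 0) (pm 0 1 0)
            (flipP 1 (pm e1 0 e3) (flipP (pm d1 0 d3) 1 (BD A (-(A*c3)) c3))))
          + ((1-κ:ℝ):ℂ) • depol (flipP (pm 0 1 0) (pm 0 1 0)
            (flipP 1 (pm e1 0 e3) (flipP (pm d1 0 d3) 1 (BD A (-(A*c3)) c3)))))
        * (rotY cg sg ⊗ₖ rotY ch sh)ᴴ = BD 0 0 c3 := by
      rw [rho_steps A c3 d1 d3 e1 e3 hdu heu, hLe']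
      rw [depol_state _ d1 d3 e1 e3 hdu heu]
      have hmid : (κ:ℂ) • ((4⁻¹:ℂ) • ((1:Mat4)
            + ((L:ℝ):ℂ) • (pm d1 0 d3 ⊗ₖ pm e1 0 e3)))
          + ((1-κ:ℝ):ℂ) • ((4⁻¹:ℂ) • (1:Mat4))
          = (4⁻¹:ℂ) • ((1:Mat4) + ((κ*L :ℝ):ℂ) • (pm d1 0 d3 ⊗ₖ pm e1 0 e3)) := by
        push_cast
        module
      rw [hmid, hκL']
      rw [conjG_state _ _ hgg hhh]
      rw [hgconj, hpe, Matrix.mul_smul, Matrix.smul_mul, hhconj]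
      rw [BD_axis3, Matrix.kronecker_smul, smul_smul, habs3]
    -- value on χ
    have hperp' : ((d1*m1+d3*m3 : ℝ):ℂ) = 0 := by
      rw [show d1*m1+d3*m3 = (0:ℝ) from hdp]
      norm_num
    have hflip3 : flipP (pm 0 1 0) (pm 0 1 0)
        (flipP 1 (pm e1 0 e3) (flipP (pm d1 0 d3) 1 χ)) = (4⁻¹:ℂ) • (1:Mat4) := by
      rw [hχeq, Fin.sum_univ_two, Fin.sum_univ_two, Fin.sum_univ_two,
        hA0', hA1', hB0', hB1']
      simp only [flipP_add, flipP_smul]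
      simp only [flipA_gen d1 d3 m1 m2 m3 hdu]
      simp only [flipB_gen e1 e3 n1 n2 n3 heu]
      simp only [flipY_gen]
      simp only [hperp', mul_zero, zero_mul, zero_smul, add_zero]
      rw [← add_smul, ← add_smul, ← add_smul, hp1c, one_smul]
    have hχv : (rotY cg sg ⊗ₖ rotY ch sh) *
        ((κ:ℂ) • (flipP (pm 0 1 0) (pm 0 1 0)
            (flipP 1 (pm e1 0 e3) (flipP (pm d1 0 d3) 1 χ)))
          + ((1-κ:ℝ):ℂ) • depol (flipP (pm 0 1 0) (pm 0 1 0)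
            (flipP 1 (pm e1 0 e3) (flipP (pm d1 0 d3) 1 χ))))
        * (rotY cg sg ⊗ₖ rotY ch sh)ᴴ = BD 0 0 0 := by
      rw [hflip3, depol_one4]
      have hmid2 : (κ:ℂ) • ((4⁻¹:ℂ) • (1:Mat4))
          + ((1-κ:ℝ):ℂ) • ((4⁻¹:ℂ) • (1:Mat4)) = (4⁻¹:ℂ) • (1:Mat4) := by
        push_cast
        module
      rw [hmid2, conjG_one _ _ hgg hhh, BD_zero]
    have h2 : D ((rotY cg sg ⊗ₖ rotY ch sh) *
        ((κ:ℂ) • (flipP (pm 0 1 0) (pm 0 1 0)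
            (flipP 1 (pm e1 0 e3) (flipP (pm d1 0 d3) 1 (BD A (-(A*c3)) c3))))
          + ((1-κ:ℝ):ℂ) • depol (flipP (pm 0 1 0) (pm 0 1 0)
            (flipP 1 (pm e1 0 e3) (flipP (pm d1 0 d3) 1 (BD A (-(A*c3)) c3)))))
        * (rotY cg sg ⊗ₖ rotY ch sh)ᴴ)
        ((rotY cg sg ⊗ₖ rotY ch sh) *
        ((κ:ℂ) • (flipP (pm 0 1 0) (pm 0 1 0)
            (flipP 1 (pm e1 0 e3) (flipP (pm d1 0 d3) 1 χ)))
          + ((1-κ:ℝ):ℂ) • depol (flipP (pm 0 1 0) (pm 0 1 0)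
            (flipP 1 (pm e1 0 e3) (flipP (pm d1 0 d3) 1 χ))))
        * (rotY cg sg ⊗ₖ rotY ch sh)ᴴ) ≤ D (BD A (-(A*c3)) c3) χ :=
      hD _ hΦcptp _ _ hρd hχd
    rw [hρv, hχv] at h2
    exact h2

end UF

open UF

/-- Universal freezing: as long as e^{-2γt}|c1| ≥ |c3|, the geometric
discord of the evolved state is constant, equal to D(ρ(0,0,c3), ρ(0,0,0)). -/
theorem universal_freezing
    (D : Mat4 → Mat4 → ℝ) (hD : Contractive D) (hT : TransposeInvariant D)
    (hJC : JointlyConvex D) (c1 c3 γ : ℝ)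
    (hc1 : c1 ∈ Set.Icc (-1 : ℝ) 1) (hc3 : c3 ∈ Set.Icc (-1 : ℝ) 1) (hγ : 0 < γ) :
    ∀ t : ℝ, 0 ≤ t → |c3| ≤ Real.exp (-(2 * γ * t)) * |c1| →
      QD D (BD (c1 * Real.exp (-(2 * γ * t)))
              (-(c1 * c3 * Real.exp (-(2 * γ * t)))) c3)
        = D (BD 0 0 c3) (BD 0 0 0) := by
  intro t ht hfr
  rw [show -(c1 * c3 * Real.exp (-(2 * γ * t)))
      = -((c1 * Real.exp (-(2 * γ * t))) * c3) by ring]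
  set q := Real.exp (-(2*γ*t)) with hq
  have hq0 : 0 < q := Real.exp_pos _
  have hq1 : q ≤ 1 := by
    rw [hq]
    apply Real.exp_le_one_iff.mpr
    nlinarith
  set A := c1 * q with hAdef
  have hc1abs : |c1| ≤ 1 := abs_le.mpr ⟨hc1.1, hc1.2⟩
  have hAabs : |A| = |c1| * q := by
    rw [hAdef, abs_mul, abs_of_pos hq0]
  have hA1 : |A| ≤ 1 := by
    rw [hAabs]
    nlinarith [abs_nonneg c1]
  have hCA : |c3| ≤ |A| := by
    rw [hAabs, mul_comm]
    exact hfr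
  have hc31 : |c3| ≤ 1 := le_trans hCA hA1
  have hcls : IsClassical (BD A 0 0) := isClassical_BD_axis1 A hA1
  have hup : D (BD A (-(A*c3)) c3) (BD A 0 0) ≤ D (BD 0 0 c3) (BD 0 0 0) :=
    upper_bound hD hA1 hc31
  have hlowW : D (BD 0 0 c3) (BD 0 0 0) ≤ D (BD A (-(A*c3)) c3) (BD A 0 0) :=
    lower_bound hD hA1 hCA hcls
  have heq : D (BD A (-(A*c3)) c3) (BD A 0 0) = D (BD 0 0 c3) (BD 0 0 0) :=
    le_antisymm hup hlowW
  have hlb : ∀ x ∈ {x : ℝ | ∃ χ : Mat4, IsClassical χ ∧ x = D (BD A (-(A*c3)) c3) χ},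
      D (BD 0 0 c3) (BD 0 0 0) ≤ x := by
    rintro x ⟨χ, hχc, rfl⟩
    exact lower_bound hD hA1 hCA hχc
  rw [QD]
  apply le_antisymm
  · exact csInf_le ⟨D (BD 0 0 c3) (BD 0 0 0), hlb⟩ ⟨BD A 0 0, hcls, heq.symm⟩
  · exact le_csInf ⟨D (BD A (-(A*c3)) c3) (BD A 0 0), BD A 0 0, hcls, rfl⟩ hlb
end
end

section
/- Let D be a contractive and transposition invariant distance on two-qubit density matrices. For any Bell-diagonal density matrix ρ = ρ(c1,c2,c3) and any two-qubit density matrix ς, define ς₋ = (σ2⊗σ2)·ςᵀ·(σ2⊗σ2) (which is again a two-qubit density matrix, obtained from ς by flipping the signs of both local Bloch vectors while keeping the correlation matrix; note that ρ₋ = ρ for Bell-diagonal ρ). Then D(ρ, ς₋) = D(ρ, ς). -/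
open Matrix Kronecker
open scoped ComplexOrder

noncomputable section

def U4 : Mat4 := σ2 ⊗ₖ σ2

lemma U4_herm : U4ᴴ = U4 := by
  ext ⟨a,b⟩ ⟨c,d⟩
  fin_cases a <;> fin_cases b <;> fin_cases c <;> fin_cases d <;>
    simp [U4, σ2, Matrix.kroneckerMap_apply]

lemma sigma2_sq : σ2 * σ2 = 1 := by
  ext i j; fin_cases i <;> fin_cases j <;>
    simp [σ2, Matrix.mul_apply, Fin.sum_univ_two, Matrix.one_apply, Complex.I_mul_I]

lemma U4_sq : U4 * U4 = 1 := by
  rw [U4, ← Matrix.mul_kronecker_mul, sigma2_sq, Matrix.one_kronecker_one]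

lemma conj1 : σ2 * σ1 * σ2 = -σ1 := by
  ext a b; fin_cases a <;> fin_cases b <;>
    simp [σ1, σ2, Matrix.mul_apply, Fin.sum_univ_two]

lemma conj2 : σ2 * σ2 * σ2 = σ2 := by rw [sigma2_sq, one_mul]

lemma conj3 : σ2 * σ3 * σ2 = -σ3 := by
  ext a b; fin_cases a <;> fin_cases b <;>
    simp [σ3, σ2, Matrix.mul_apply, Fin.sum_univ_two, Complex.I_mul_I]
lemma U4_conj_kron (A : Mat2) (h : σ2 * A * σ2 = -A) :
    U4 * (A ⊗ₖ A) * U4 = A ⊗ₖ A := by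
  rw [U4, ← Matrix.mul_kronecker_mul, ← Matrix.mul_kronecker_mul, h]
  ext i j; simp

lemma U4_conj_BD (c1 c2 c3 : ℝ) : U4 * BD c1 c2 c3 * U4 = BD c1 c2 c3 := by
  have h1 : U4 * (σ1 ⊗ₖ σ1) * U4 = σ1 ⊗ₖ σ1 := U4_conj_kron σ1 conj1
  have h3 : U4 * (σ3 ⊗ₖ σ3) * U4 = σ3 ⊗ₖ σ3 := U4_conj_kron σ3 conj3
  have h2 : U4 * (σ2 ⊗ₖ σ2) * U4 = σ2 ⊗ₖ σ2 := by
    rw [U4, ← Matrix.mul_kronecker_mul, ← Matrix.mul_kronecker_mul, conj2]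
  simp only [BD, Matrix.mul_smul, Matrix.smul_mul, Matrix.mul_add, Matrix.add_mul,
    h1, h2, h3, Matrix.mul_one, Matrix.one_mul, U4_sq]

lemma sigma1_t : σ1ᵀ = σ1 := by ext a b; fin_cases a <;> fin_cases b <;> simp [σ1]
lemma sigma3_t : σ3ᵀ = σ3 := by ext a b; fin_cases a <;> fin_cases b <;> simp [σ3]
lemma sigma2_t : σ2ᵀ = -σ2 := by ext a b; fin_cases a <;> fin_cases b <;> simp [σ2]

lemma BD_transpose (c1 c2 c3 : ℝ) : (BD c1 c2 c3)ᵀ = BD c1 c2 c3 := by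
  have h1 : (σ1 ⊗ₖ σ1)ᵀ = σ1 ⊗ₖ σ1 := by
    rw [← Matrix.kroneckerMap_transpose, sigma1_t]
  have h3 : (σ3 ⊗ₖ σ3)ᵀ = σ3 ⊗ₖ σ3 := by
    rw [← Matrix.kroneckerMap_transpose, sigma3_t]
  have h2 : (σ2 ⊗ₖ σ2)ᵀ = σ2 ⊗ₖ σ2 := by
    rw [← Matrix.kroneckerMap_transpose, sigma2_t]; ext i j; simp
  simp only [BD, Matrix.transpose_smul, Matrix.transpose_add, Matrix.transpose_one, h1, h2, h3]
lemma psd_add {A B : Mat4} (hA : A.PosSemidef) (hB : B.PosSemidef) : (A + B).PosSemidef := by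
  refine ⟨hA.1.add hB.1, fun x => ?_⟩
  have := add_nonneg (hA.2 x) (hB.2 x)
  simpa [Matrix.add_mulVec, dotProduct_add, mul_add, add_mul, Finsupp.sum_add] using this

lemma psd_smul {A : Mat4} (hA : A.PosSemidef) {a : ℝ} (ha : 0 ≤ a) :
    ((a : ℂ) • A).PosSemidef := by
  refine ⟨?_, fun x => ?_⟩
  · unfold Matrix.IsHermitian
    rw [Matrix.conjTranspose_smul, hA.1.eq]
    congr 1
    simp
  · have := mul_nonneg (Complex.zero_le_real.2 ha) (hA.2 x)
    simpa [Matrix.smul_mulVec, dotProduct_smul, smul_eq_mul, Finsupp.mul_sum, mul_assoc, mul_left_comm] using this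

lemma BD_trace (c1 c2 c3 : ℝ) : (BD c1 c2 c3).trace = 1 := by
  have t1 : (σ1 ⊗ₖ σ1).trace = 0 := by
    simp [Matrix.trace, Fintype.sum_prod_type, Fin.sum_univ_two, σ1]
  have t2 : (σ2 ⊗ₖ σ2).trace = 0 := by
    simp [Matrix.trace, Fintype.sum_prod_type, Fin.sum_univ_two, σ2]
  have t3 : (σ3 ⊗ₖ σ3).trace = 0 := by
    simp [Matrix.trace, Fintype.sum_prod_type, Fin.sum_univ_two, σ3]
  have t0 : (1 : Mat4).trace = 4 := by
    simp [Matrix.trace, Fintype.sum_prod_type, Fin.sum_univ_two, Matrix.one_apply]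
  simp only [BD, Matrix.trace_smul, Matrix.trace_add, t0, t1, t2, t3, smul_zero,
    add_zero, smul_eq_mul, mul_zero]
  norm_num
lemma rank1_psd (w : Fin 2 × Fin 2 → ℂ) :
    (Matrix.of fun i j : Fin 2 × Fin 2 => (starRingEnd ℂ) (w i) * w j).PosSemidef := by
  have h := Matrix.posSemidef_conjTranspose_mul_self
    (Matrix.of fun (i j : Fin 2 × Fin 2) => if i = ((0 : Fin 2), (0 : Fin 2)) then w j else 0)
  convert h using 1
  ext i j
  simp [Matrix.mul_apply, Matrix.conjTranspose_apply, Fintype.sum_prod_type,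
    Fin.sum_univ_two, apply_ite]

lemma BD_vertex_psd (e1 e2 e3 : ℝ) (w : Fin 2 × Fin 2 → ℂ)
    (h : BD e1 e2 e3 = ((1/2 : ℝ) : ℂ) •
      Matrix.of fun i j : Fin 2 × Fin 2 => (starRingEnd ℂ) (w i) * w j) :
    (BD e1 e2 e3).PosSemidef := by
  rw [h]; exact psd_smul (rank1_psd w) (by norm_num)

lemma psd_v1 : (BD 1 (-1) 1).PosSemidef := by
  apply BD_vertex_psd 1 (-1) 1 (fun i => if i.1 = i.2 then 1 else 0)
  ext ⟨a,b⟩ ⟨c,d⟩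
  fin_cases a <;> fin_cases b <;> fin_cases c <;> fin_cases d <;>
    simp [BD, σ1, σ2, σ3, Matrix.one_apply, Prod.ext_iff] <;> norm_num
lemma psd_v2 : (BD (-1) 1 1).PosSemidef := by
  apply BD_vertex_psd (-1) 1 1
    (fun i => if i = ((0:Fin 2),(0:Fin 2)) then 1 else if i = (1,1) then -1 else 0)
  ext ⟨a,b⟩ ⟨c,d⟩
  fin_cases a <;> fin_cases b <;> fin_cases c <;> fin_cases d <;>
    simp [BD, σ1, σ2, σ3, Matrix.one_apply, Prod.ext_iff] <;> norm_num

lemma psd_v3 : (BD 1 1 (-1)).PosSemidef := by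
  apply BD_vertex_psd 1 1 (-1)
    (fun i => if i = ((0:Fin 2),(1:Fin 2)) then 1 else if i = (1,0) then 1 else 0)
  ext ⟨a,b⟩ ⟨c,d⟩
  fin_cases a <;> fin_cases b <;> fin_cases c <;> fin_cases d <;>
    simp [BD, σ1, σ2, σ3, Matrix.one_apply, Prod.ext_iff] <;> norm_num

lemma psd_v4 : (BD (-1) (-1) (-1)).PosSemidef := by
  apply BD_vertex_psd (-1) (-1) (-1)
    (fun i => if i = ((0:Fin 2),(1:Fin 2)) then 1 else if i = (1,0) then -1 else 0)
  ext ⟨a,b⟩ ⟨c,d⟩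
  fin_cases a <;> fin_cases b <;> fin_cases c <;> fin_cases d <;>
    simp [BD, σ1, σ2, σ3, Matrix.one_apply, Prod.ext_iff] <;> norm_num
lemma BD_comb (a b : ℝ) (hab : a + b = 1) (x1 x2 x3 y1 y2 y3 : ℝ) :
    BD (a*x1+b*y1) (a*x2+b*y2) (a*x3+b*y3)
      = (a:ℂ) • BD x1 x2 x3 + (b:ℂ) • BD y1 y2 y3 := by
  have hab' : (a:ℂ) + (b:ℂ) = 1 := by exact_mod_cast hab
  simp only [BD]
  push_cast
  match_scalars <;> first | ring1 | linear_combination (-1/4 : ℂ) * hab'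
set_option maxHeartbeats 1000000 in
lemma BD_density (c1 c2 c3 : ℝ) (hc : InTetra (c1, c2, c3)) :
    IsDensityMatrix (BD c1 c2 c3) := by
  refine ⟨?_, BD_trace c1 c2 c3⟩
  have hsub : ({((1 : ℝ), (-1 : ℝ), (1 : ℝ)), ((-1 : ℝ), (1 : ℝ), (1 : ℝ)),
      ((1 : ℝ), (1 : ℝ), (-1 : ℝ)), ((-1 : ℝ), (-1 : ℝ), (-1 : ℝ))} : Set (ℝ × ℝ × ℝ))
      ⊆ {c : ℝ × ℝ × ℝ | (BD c.1 c.2.1 c.2.2).PosSemidef} := by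
    intro c hcmem
    simp only [Set.mem_insert_iff, Set.mem_singleton_iff] at hcmem
    rcases hcmem with rfl | rfl | rfl | rfl
    · exact psd_v1
    · exact psd_v2
    · exact psd_v3
    · exact psd_v4
  have hconv : Convex ℝ {c : ℝ × ℝ × ℝ | (BD c.1 c.2.1 c.2.2).PosSemidef} := by
    intro x hx y hy a b ha hb hab
    have : BD (a • x + b • y).1 (a • x + b • y).2.1 (a • x + b • y).2.2
        = (a:ℂ) • BD x.1 x.2.1 x.2.2 + (b:ℂ) • BD y.1 y.2.1 y.2.2 := by
      simp only [Prod.fst_add, Prod.snd_add, Prod.smul_fst, Prod.smul_snd, smul_eq_mul]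
      exact BD_comb a b hab x.1 x.2.1 x.2.2 y.1 y.2.1 y.2.2
    simpa only [Set.mem_setOf_eq, this] using psd_add (psd_smul hx ha) (psd_smul hy hb)
  have h2 := convexHull_min hsub hconv hc
  simpa only [Set.mem_setOf_eq] using h2
/-- flipping the signs of both local Bloch vectors of ς (via
ς₋ = (σ₂⊗σ₂)·ςᵀ·(σ₂⊗σ₂)) leaves the distance to any Bell-diagonal state unchanged. -/
theorem distance_invariant_under_local_Bloch_flip
    (D : Mat4 → Mat4 → ℝ) (hD : Contractive D) (hT : TransposeInvariant D)
    (c1 c2 c3 : ℝ) (hc : InTetra (c1, c2, c3)) (ς : Mat4) (hς : IsDensityMatrix ς) :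
    D (BD c1 c2 c3) ((σ2 ⊗ₖ σ2) * ςᵀ * (σ2 ⊗ₖ σ2)) = D (BD c1 c2 c3) ς := by
  have hρ : IsDensityMatrix (BD c1 c2 c3) := BD_density c1 c2 c3 hc
  have hΛ : IsCPTP (fun X => U4 * X * U4) := by
    refine ⟨1, fun _ => U4, ?_, fun X => ?_⟩
    · simp [U4_herm, U4_sq]
    · simp [U4_herm]
  have hςt : IsDensityMatrix ςᵀ :=
    ⟨hς.1.transpose, by rw [Matrix.trace_transpose]; exact hς.2⟩
  have hς2 : IsDensityMatrix (U4 * ςᵀ * U4) := by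
    constructor
    · have := hςt.1.mul_mul_conjTranspose_same U4
      rwa [U4_herm] at this
    · rw [Matrix.trace_mul_cycle, U4_sq, Matrix.one_mul, Matrix.trace_transpose]
      exact hς.2
  have key1 : D (BD c1 c2 c3) ςᵀ = D (BD c1 c2 c3) ς := by
    have := hT (BD c1 c2 c3) ς hρ hς
    rwa [BD_transpose] at this
  have h1 : D (BD c1 c2 c3) (U4 * ςᵀ * U4) ≤ D (BD c1 c2 c3) ςᵀ := by
    have := hD _ hΛ (BD c1 c2 c3) ςᵀ hρ hςt
    simpa [U4_conj_BD] using this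
  have h2 : D (BD c1 c2 c3) ςᵀ ≤ D (BD c1 c2 c3) (U4 * ςᵀ * U4) := by
    have := hD _ hΛ (BD c1 c2 c3) (U4 * ςᵀ * U4) hρ hς2
    have e : U4 * (U4 * ςᵀ * U4) * U4 = ςᵀ := by
      rw [← Matrix.mul_assoc, ← Matrix.mul_assoc, U4_sq, Matrix.one_mul,
        Matrix.mul_assoc, U4_sq, Matrix.mul_one]
    simpa [U4_conj_BD, e] using this
  have : D (BD c1 c2 c3) (U4 * ςᵀ * U4) = D (BD c1 c2 c3) ς := by
    rw [← key1]; exact le_antisymm h1 h2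
  exact this
end
end
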